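/- arXiv:0908.0604 — 8 statements merged into one kernel-verified Lean document; each statement's English description precedes it below -/
import Mathlib

section
/- Let k be a field, let (i_A, A₁, π_A) be a self-extension of a k-vector space A₀ and (i_B, B₁, π_B) a self-extension of a k-vector space B₀. Set F = {(u, v) ∈ (A₁ ⊗ B₀) × (A₀ ⊗ B₁) : (π_A ⊗ id_{B₀}) u = (id_{A₀} ⊗ π_B) v}, N₋ = {((i_A ⊗ id_{B₀}) w, −(id_{A₀} ⊗ i_B) w) : w ∈ A₀ ⊗ B₀} and N₊ = {((i_A ⊗ id_{B₀}) w, (id_{A₀} ⊗ i_B) w) : w ∈ A₀ ⊗ B₀} (both submodules of F; all tensor products over k). Then: (1) the linear map F → A₁ ⊗ B₁, (u, v) ↦ (i_A ⊗ id_{B₁}) v − (id_{A₁} ⊗ i_B) u, vanishes on N₊, and the induced map ι : F ⧸ N₊ → A₁ ⊗ B₁ is injective; (2) for every x ∈ A₁ ⊗ B₁ the pair ((id_{A₁} ⊗ π_B) x, (π_A ⊗ id_{B₁}) x) lies in F, and the resulting linear map π : A₁ ⊗ B₁ → F ⧸ N₋ is surjective; (3) ker π = range ι. In other words, 0 → F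 ⧸ N₊ → A₁ ⊗ B₁ → F ⧸ N₋ → 0 is a short exact sequence. -/
open scoped TensorProduct

private theorem tmap_tmap {k : Type*} [CommRing k]
    {M₁ M₂ M₃ N₁ N₂ N₃ : Type*}
    [AddCommGroup M₁] [AddCommGroup M₂] [AddCommGroup M₃]
    [AddCommGroup N₁] [AddCommGroup N₂] [AddCommGroup N₃]
    [Module k M₁] [Module k M₂] [Module k M₃]
    [Module k N₁] [Module k N₂] [Module k N₃]
    (f' : M₂ →ₗ[k] M₃) (g' : N₂ →ₗ[k] N₃) (f : M₁ →ₗ[k] M₂) (g : N₁ →ₗ[k] N₂)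
    (x : M₁ ⊗[k] N₁) :
    TensorProduct.map f' g' (TensorProduct.map f g x)
      = TensorProduct.map (f'.comp f) (g'.comp g) x := by
  rw [← LinearMap.comp_apply, ← TensorProduct.map_comp]

/-- **The exact sequence `0 → (A ⊗ T(B))₁ → A₁ ⊗ B₁ → (A ⊗ B)₁ → 0`.**
For self-extensions `A = (iA, A₁, πA)` of `A₀` and `B = (iB, B₁, πB)` of `B₀`
over a field `k`, with
`F = {(u,v) | (πA ⊗ id) u = (id ⊗ πB) v} ⊆ (A₁ ⊗ B₀) × (A₀ ⊗ B₁)`,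
`N₋ = {((iA ⊗ id) w, -(id ⊗ iB) w)}` and `N₊ = {((iA ⊗ id) w, (id ⊗ iB) w)}`,
the sequence `0 → F ⧸ N₊ → A₁ ⊗ B₁ → F ⧸ N₋ → 0` is short exact. -/
theorem tensor_yoneda_exact_sequence
    {k A₀ A₁ B₀ B₁ : Type*} [Field k]
    [AddCommGroup A₀] [AddCommGroup A₁] [AddCommGroup B₀] [AddCommGroup B₁]
    [Module k A₀] [Module k A₁] [Module k B₀] [Module k B₁]
    (iA : A₀ →ₗ[k] A₁) (πA : A₁ →ₗ[k] A₀)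
    (iB : B₀ →ₗ[k] B₁) (πB : B₁ →ₗ[k] B₀)
    (hiA : Function.Injective iA) (hπA : Function.Surjective πA)
    (hA : LinearMap.range iA = LinearMap.ker πA)
    (hiB : Function.Injective iB) (hπB : Function.Surjective πB)
    (hB : LinearMap.range iB = LinearMap.ker πB)
    (F : Submodule k ((A₁ ⊗[k] B₀) × (A₀ ⊗[k] B₁)))
    (hF : ∀ y : (A₁ ⊗[k] B₀) × (A₀ ⊗[k] B₁), y ∈ F ↔
      TensorProduct.map πA (LinearMap.id : B₀ →ₗ[k] B₀) y.1
        = TensorProduct.map (LinearMap.id : A₀ →ₗ[k] A₀) πB y.2)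
    (Nminus : Submodule k F)
    (hNminus : ∀ y : F, y ∈ Nminus ↔ ∃ w : A₀ ⊗[k] B₀,
      (y : (A₁ ⊗[k] B₀) × (A₀ ⊗[k] B₁))
        = (TensorProduct.map iA (LinearMap.id : B₀ →ₗ[k] B₀) w,
           -(TensorProduct.map (LinearMap.id : A₀ →ₗ[k] A₀) iB w)))
    (Nplus : Submodule k F)
    (hNplus : ∀ y : F, y ∈ Nplus ↔ ∃ w : A₀ ⊗[k] B₀,
      (y : (A₁ ⊗[k] B₀) × (A₀ ⊗[k] B₁))
        = (TensorProduct.map iA (LinearMap.id : B₀ →ₗ[k] B₀) w,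
           TensorProduct.map (LinearMap.id : A₀ →ₗ[k] A₀) iB w)) :
    -- (1) the map `(u,v) ↦ (iA ⊗ id) v - (id ⊗ iB) u` kills `N₊` and the
    --     induced map `ι : F ⧸ N₊ → A₁ ⊗ B₁` is injective
    ∃ g : F →ₗ[k] (A₁ ⊗[k] B₁),
      (∀ y : F, g y =
        TensorProduct.map iA (LinearMap.id : B₁ →ₗ[k] B₁)
            (y : (A₁ ⊗[k] B₀) × (A₀ ⊗[k] B₁)).2
          - TensorProduct.map (LinearMap.id : A₁ →ₗ[k] A₁) iB
            (y : (A₁ ⊗[k] B₀) × (A₀ ⊗[k] B₁)).1) ∧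
      (∀ y : F, y ∈ Nplus → g y = 0) ∧
      ∃ ι : (F ⧸ Nplus) →ₗ[k] (A₁ ⊗[k] B₁),
        (∀ y : F, ι (Nplus.mkQ y) = g y) ∧
        Function.Injective ι ∧
        -- (2) `x ↦ ((id ⊗ πB) x, (πA ⊗ id) x)` lands in `F` and the resulting
        --     map `π : A₁ ⊗ B₁ → F ⧸ N₋` is surjective
        ∃ (hmem : ∀ x : A₁ ⊗[k] B₁,
            ((TensorProduct.map (LinearMap.id : A₁ →ₗ[k] A₁) πB x,
              TensorProduct.map πA (LinearMap.id : B₁ →ₗ[k] B₁) x) :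
              (A₁ ⊗[k] B₀) × (A₀ ⊗[k] B₁)) ∈ F)
          (π : (A₁ ⊗[k] B₁) →ₗ[k] (F ⧸ Nminus)),
          (∀ x : A₁ ⊗[k] B₁, π x = Nminus.mkQ
            ⟨(TensorProduct.map (LinearMap.id : A₁ →ₗ[k] A₁) πB x,
              TensorProduct.map πA (LinearMap.id : B₁ →ₗ[k] B₁) x), hmem x⟩) ∧
          Function.Surjective π ∧
          -- (3) exactness in the middle
          LinearMap.ker π = LinearMap.range ι := by
  classical
  -- basic consequences of exactness
  have hπiA : πA.comp iA = 0 := by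
    ext a
    have : iA a ∈ LinearMap.ker πA := hA ▸ LinearMap.mem_range_self iA a
    simpa using this
  have hπiB : πB.comp iB = 0 := by
    ext b
    have : iB b ∈ LinearMap.ker πB := hB ▸ LinearMap.mem_range_self iB b
    simpa using this
  have hexA : Function.Exact iA πA := LinearMap.exact_iff.mpr hA.symm
  have hexB : Function.Exact iB πB := LinearMap.exact_iff.mpr hB.symm
  -- injectivity of tensored maps (flatness)
  have injA_B0 : Function.Injective
      (TensorProduct.map iA (LinearMap.id : B₀ →ₗ[k] B₀)) :=
    Module.Flat.rTensor_preserves_injective_linearMap iA hiA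
  have injA_B1 : Function.Injective
      (TensorProduct.map iA (LinearMap.id : B₁ →ₗ[k] B₁)) :=
    Module.Flat.rTensor_preserves_injective_linearMap iA hiA
  -- exactness of tensored sequences
  have hexA_B0 : Function.Exact
      (TensorProduct.map iA (LinearMap.id : B₀ →ₗ[k] B₀))
      (TensorProduct.map πA (LinearMap.id : B₀ →ₗ[k] B₀)) :=
    rTensor_exact B₀ hexA hπA
  have hexA_B1 : Function.Exact
      (TensorProduct.map iA (LinearMap.id : B₁ →ₗ[k] B₁))
      (TensorProduct.map πA (LinearMap.id : B₁ →ₗ[k] B₁)) :=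
    rTensor_exact B₁ hexA hπA
  have hexB_A0 : Function.Exact
      (TensorProduct.map (LinearMap.id : A₀ →ₗ[k] A₀) iB)
      (TensorProduct.map (LinearMap.id : A₀ →ₗ[k] A₀) πB) :=
    lTensor_exact A₀ hexB hπB
  -- surjectivity of tensored maps
  have surjπB_A1 : Function.Surjective
      (TensorProduct.map (LinearMap.id : A₁ →ₗ[k] A₁) πB) :=
    LinearMap.lTensor_surjective A₁ hπB
  have surjπA_B0 : Function.Surjective
      (TensorProduct.map πA (LinearMap.id : B₀ →ₗ[k] B₀)) :=
    LinearMap.rTensor_surjective B₀ hπA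
  -- the map g
  set G : ((A₁ ⊗[k] B₀) × (A₀ ⊗[k] B₁)) →ₗ[k] (A₁ ⊗[k] B₁) :=
    (TensorProduct.map iA (LinearMap.id : B₁ →ₗ[k] B₁)).comp
        (LinearMap.snd k (A₁ ⊗[k] B₀) (A₀ ⊗[k] B₁))
      - (TensorProduct.map (LinearMap.id : A₁ →ₗ[k] A₁) iB).comp
        (LinearMap.fst k (A₁ ⊗[k] B₀) (A₀ ⊗[k] B₁)) with hG
  set g : F →ₗ[k] (A₁ ⊗[k] B₁) := G.comp F.subtype with hgdef
  have hg : ∀ y : F, g y =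
      TensorProduct.map iA (LinearMap.id : B₁ →ₗ[k] B₁)
          (y : (A₁ ⊗[k] B₀) × (A₀ ⊗[k] B₁)).2
        - TensorProduct.map (LinearMap.id : A₁ →ₗ[k] A₁) iB
          (y : (A₁ ⊗[k] B₀) × (A₀ ⊗[k] B₁)).1 := fun y => rfl
  -- g kills Nplus
  have hkill : ∀ y : F, y ∈ Nplus → g y = 0 := by
    intro y hy
    obtain ⟨w, hw⟩ := (hNplus y).mp hy
    rw [hg y, hw]
    dsimp only
    simp only [tmap_tmap, LinearMap.comp_id, LinearMap.id_comp, sub_self]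
  have hker_le : Nplus ≤ LinearMap.ker g := fun y hy => LinearMap.mem_ker.mpr (hkill y hy)
  -- g has kernel exactly Nplus
  have hker_ge : LinearMap.ker g ≤ Nplus := by
    intro y hy
    have hy0 : TensorProduct.map iA (LinearMap.id : B₁ →ₗ[k] B₁)
          (y : (A₁ ⊗[k] B₀) × (A₀ ⊗[k] B₁)).2
        = TensorProduct.map (LinearMap.id : A₁ →ₗ[k] A₁) iB
          (y : (A₁ ⊗[k] B₀) × (A₀ ⊗[k] B₁)).1 := by
      have := LinearMap.mem_ker.mp hy
      rw [hg y, sub_eq_zero] at this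
      exact this
    set u := (y : (A₁ ⊗[k] B₀) × (A₀ ⊗[k] B₁)).1 with hu
    set v := (y : (A₁ ⊗[k] B₀) × (A₀ ⊗[k] B₁)).2 with hv
    have hyF : TensorProduct.map πA (LinearMap.id : B₀ →ₗ[k] B₀) u
        = TensorProduct.map (LinearMap.id : A₀ →ₗ[k] A₀) πB v := (hF _).mp y.2
    -- apply (id ⊗ πB) to hy0
    have h1 : TensorProduct.map iA (LinearMap.id : B₀ →ₗ[k] B₀)
        (TensorProduct.map (LinearMap.id : A₀ →ₗ[k] A₀) πB v) = 0 := by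
      have h := congrArg (TensorProduct.map (LinearMap.id : A₁ →ₗ[k] A₁) πB) hy0
      simp only [tmap_tmap, LinearMap.comp_id, LinearMap.id_comp, hπiB,
        TensorProduct.map_zero_right, LinearMap.zero_apply] at h
      simp only [tmap_tmap, LinearMap.comp_id, LinearMap.id_comp]
      exact h
    have h2 : TensorProduct.map (LinearMap.id : A₀ →ₗ[k] A₀) πB v = 0 :=
      injA_B0 (by rw [h1, map_zero])
    have h3 : TensorProduct.map πA (LinearMap.id : B₀ →ₗ[k] B₀) u = 0 := by
      rw [hyF, h2]
    obtain ⟨w, hw⟩ := (hexA_B0 u).mp h3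
    have h4 : v = TensorProduct.map (LinearMap.id : A₀ →ₗ[k] A₀) iB w := by
      apply injA_B1
      rw [hy0, ← hw]
      simp only [tmap_tmap, LinearMap.comp_id, LinearMap.id_comp]
    refine (hNplus y).mpr ⟨w, ?_⟩
    have hyuv : (y : (A₁ ⊗[k] B₀) × (A₀ ⊗[k] B₁)) = (u, v) := rfl
    rw [hyuv, hw, ← h4]
  -- the induced map ι
  set ι : (F ⧸ Nplus) →ₗ[k] (A₁ ⊗[k] B₁) := Nplus.liftQ g hker_le with hιdef
  have hι : ∀ y : F, ι (Nplus.mkQ y) = g y := fun y => rfl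
  have hιinj : Function.Injective ι := by
    rw [← LinearMap.ker_eq_bot]
    exact Submodule.ker_liftQ_eq_bot _ _ _ hker_ge
  -- the map π
  have hmem : ∀ x : A₁ ⊗[k] B₁,
      ((TensorProduct.map (LinearMap.id : A₁ →ₗ[k] A₁) πB x,
        TensorProduct.map πA (LinearMap.id : B₁ →ₗ[k] B₁) x) :
        (A₁ ⊗[k] B₀) × (A₀ ⊗[k] B₁)) ∈ F := by
    intro x
    rw [hF]
    dsimp only
    simp only [tmap_tmap, LinearMap.comp_id, LinearMap.id_comp]
  set P : (A₁ ⊗[k] B₁) →ₗ[k] ((A₁ ⊗[k] B₀) × (A₀ ⊗[k] B₁)) :=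
    LinearMap.prod (TensorProduct.map (LinearMap.id : A₁ →ₗ[k] A₁) πB)
      (TensorProduct.map πA (LinearMap.id : B₁ →ₗ[k] B₁)) with hPdef
  set Pr : (A₁ ⊗[k] B₁) →ₗ[k] F := LinearMap.codRestrict F P (fun x => hmem x) with hPrdef
  set π : (A₁ ⊗[k] B₁) →ₗ[k] (F ⧸ Nminus) := Nminus.mkQ.comp Pr with hπdef
  have hπ : ∀ x : A₁ ⊗[k] B₁, π x = Nminus.mkQ
      ⟨(TensorProduct.map (LinearMap.id : A₁ →ₗ[k] A₁) πB x,
        TensorProduct.map πA (LinearMap.id : B₁ →ₗ[k] B₁) x), hmem x⟩ := fun x => rfl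
  -- surjectivity of π
  have hπsurj : Function.Surjective π := by
    intro q
    obtain ⟨y, rfl⟩ := Nminus.mkQ_surjective q
    set u := (y : (A₁ ⊗[k] B₀) × (A₀ ⊗[k] B₁)).1 with hu
    set v := (y : (A₁ ⊗[k] B₀) × (A₀ ⊗[k] B₁)).2 with hv
    have hyF : TensorProduct.map πA (LinearMap.id : B₀ →ₗ[k] B₀) u
        = TensorProduct.map (LinearMap.id : A₀ →ₗ[k] A₀) πB v := (hF _).mp y.2
    obtain ⟨x₀, hx₀⟩ := surjπB_A1 u
    have hd : TensorProduct.map (LinearMap.id : A₀ →ₗ[k] A₀) πB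
        (TensorProduct.map πA (LinearMap.id : B₁ →ₗ[k] B₁) x₀ - v) = 0 := by
      rw [map_sub, ← hyF, ← hx₀]
      simp only [tmap_tmap, LinearMap.comp_id, LinearMap.id_comp, sub_self]
    obtain ⟨e, he⟩ := (hexB_A0 _).mp hd
    obtain ⟨t, ht⟩ := surjπA_B0 e
    refine ⟨x₀ - TensorProduct.map (LinearMap.id : A₁ →ₗ[k] A₁) iB t, ?_⟩
    rw [hπ]
    congr 1
    apply Subtype.ext
    have hfst : TensorProduct.map (LinearMap.id : A₁ →ₗ[k] A₁) πB
        (x₀ - TensorProduct.map (LinearMap.id : A₁ →ₗ[k] A₁) iB t) = u := by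
      rw [map_sub, hx₀]
      simp only [tmap_tmap, LinearMap.comp_id, LinearMap.id_comp, hπiB,
        TensorProduct.map_zero_right, LinearMap.zero_apply, sub_zero]
    have hsnd : TensorProduct.map πA (LinearMap.id : B₁ →ₗ[k] B₁)
        (x₀ - TensorProduct.map (LinearMap.id : A₁ →ₗ[k] A₁) iB t) = v := by
      rw [map_sub, sub_eq_iff_eq_add]
      have : TensorProduct.map πA (LinearMap.id : B₁ →ₗ[k] B₁)
          (TensorProduct.map (LinearMap.id : A₁ →ₗ[k] A₁) iB t)
          = TensorProduct.map (LinearMap.id : A₀ →ₗ[k] A₀) iB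
            (TensorProduct.map πA (LinearMap.id : B₀ →ₗ[k] B₀) t) := by
        simp only [tmap_tmap, LinearMap.comp_id, LinearMap.id_comp]
      rw [this, ht, he]
      abel
    exact Prod.ext hfst hsnd
  -- exactness in the middle
  have hexact : LinearMap.ker π = LinearMap.range ι := by
    have hrange : LinearMap.range ι = LinearMap.range g :=
      Submodule.range_liftQ _ _ _
    rw [hrange]
    ext x
    constructor
    · intro hx
      have hx' : Pr x ∈ Nminus := by
        have : π x = 0 := LinearMap.mem_ker.mp hx
        rw [hπdef] at this
        exact (Submodule.Quotient.mk_eq_zero Nminus).mp this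
      obtain ⟨w, hw⟩ := (hNminus _).mp hx'
      have hw1 : TensorProduct.map (LinearMap.id : A₁ →ₗ[k] A₁) πB x
          = TensorProduct.map iA (LinearMap.id : B₀ →ₗ[k] B₀) w :=
        congrArg Prod.fst hw
      have hw2 : TensorProduct.map πA (LinearMap.id : B₁ →ₗ[k] B₁) x
          = -(TensorProduct.map (LinearMap.id : A₀ →ₗ[k] A₀) iB w) :=
        congrArg Prod.snd hw
      obtain ⟨u, hu⟩ := surjπA_B0 w
      have hcross : TensorProduct.map πA iB u
          = TensorProduct.map (LinearMap.id : A₀ →ₗ[k] A₀) iB w := by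
        have h := congrArg (TensorProduct.map (LinearMap.id : A₀ →ₗ[k] A₀) iB) hu
        simp only [tmap_tmap, LinearMap.comp_id, LinearMap.id_comp] at h
        exact h
      have hx'' : TensorProduct.map πA (LinearMap.id : B₁ →ₗ[k] B₁)
          (x + TensorProduct.map (LinearMap.id : A₁ →ₗ[k] A₁) iB u) = 0 := by
        rw [map_add, hw2]
        simp only [tmap_tmap, LinearMap.comp_id, LinearMap.id_comp]
        rw [hcross]
        abel
      obtain ⟨v, hv⟩ := (hexA_B1 _).mp hx''
      have hvπ : TensorProduct.map (LinearMap.id : A₀ →ₗ[k] A₀) πB v = w := by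
        apply injA_B0
        have h := congrArg (TensorProduct.map (LinearMap.id : A₁ →ₗ[k] A₁) πB) hv
        simp only [map_add, tmap_tmap, LinearMap.comp_id, LinearMap.id_comp, hπiB,
          TensorProduct.map_zero_right, LinearMap.zero_apply, add_zero, hw1] at h
        simp only [tmap_tmap, LinearMap.comp_id, LinearMap.id_comp]
        exact h
      have hyFmem : ((u, v) : (A₁ ⊗[k] B₀) × (A₀ ⊗[k] B₁)) ∈ F := by
        rw [hF]
        simp only
        rw [hu, hvπ]
      refine ⟨⟨(u, v), hyFmem⟩, ?_⟩
      rw [hg]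
      dsimp only
      rw [hv]
      abel
    · rintro ⟨y, rfl⟩
      set u := (y : (A₁ ⊗[k] B₀) × (A₀ ⊗[k] B₁)).1 with hu
      set v := (y : (A₁ ⊗[k] B₀) × (A₀ ⊗[k] B₁)).2 with hv
      have hyF : TensorProduct.map πA (LinearMap.id : B₀ →ₗ[k] B₀) u
          = TensorProduct.map (LinearMap.id : A₀ →ₗ[k] A₀) πB v := (hF _).mp y.2
      rw [LinearMap.mem_ker, hπdef]
      apply (Submodule.Quotient.mk_eq_zero Nminus).mpr
      apply (hNminus _).mpr
      refine ⟨TensorProduct.map (LinearMap.id : A₀ →ₗ[k] A₀) πB v, ?_⟩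
      have hgy := hg y
      apply Prod.ext
      · show TensorProduct.map (LinearMap.id : A₁ →ₗ[k] A₁) πB (g y) = _
        rw [hgy, map_sub]
        simp only [tmap_tmap, LinearMap.comp_id, LinearMap.id_comp, hπiB,
          TensorProduct.map_zero_right, LinearMap.zero_apply, sub_zero]
        rfl
      · show TensorProduct.map πA (LinearMap.id : B₁ →ₗ[k] B₁) (g y) = _
        have hcross : TensorProduct.map πA iB u
            = TensorProduct.map (LinearMap.id : A₀ →ₗ[k] A₀) iB
              (TensorProduct.map (LinearMap.id : A₀ →ₗ[k] A₀) πB v) := by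
          have h := congrArg (TensorProduct.map (LinearMap.id : A₀ →ₗ[k] A₀) iB) hyF
          simp only [tmap_tmap, LinearMap.comp_id, LinearMap.id_comp] at h ⊢
          exact h
        rw [hgy, map_sub]
        simp only [tmap_tmap, LinearMap.comp_id, LinearMap.id_comp, hπiA,
          TensorProduct.map_zero_left, LinearMap.zero_apply, zero_sub]
        rw [hcross]
        simp only [tmap_tmap, LinearMap.comp_id, LinearMap.id_comp]
  exact ⟨g, hg, hkill, ι, hι, hιinj, hmem, π, hπ, hπsurj, hexact⟩
end

section
/- Let k be a field, let (i_A, A₁, π_A) be a self-extension of a k-vector space A₀ and (i_B, B₁, π_B) a self-extension of a k-vector space B₀. Set F = {(u, v) ∈ (A₁ ⊗ B₀) × (A₀ ⊗ B₁) : (π_A ⊗ id_{B₀}) u = (id_{A₀} ⊗ π_B) v}. Then the kernel of the k-linear map F → A₁ ⊗ B₁ given by (u, v) ↦ (i_A ⊗ id_{B₁}) v − (id_{A₁} ⊗ i_B) u is exactly the submodule N₊ = {((i_A ⊗ id_{B₀}) w, (id_{A₀} ⊗ i_B) w) : w ∈ A₀ ⊗ B₀}. -/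
open scoped TensorProduct

/-- **Injectivity part of the exact-sequence lemma.**
For self-extensions `A`, `B` over a field `k`, the kernel of the map
`F → A₁ ⊗ B₁`, `(u,v) ↦ (iA ⊗ id) v - (id ⊗ iB) u`, is exactly the submodule
`N₊ = {((iA ⊗ id) w, (id ⊗ iB) w) | w : A₀ ⊗ B₀}`. -/
theorem kernel_eq_Nplus
    {k A₀ A₁ B₀ B₁ : Type*} [Field k]
    [AddCommGroup A₀] [AddCommGroup A₁] [AddCommGroup B₀] [AddCommGroup B₁]
    [Module k A₀] [Module k A₁] [Module k B₀] [Module k B₁]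
    (iA : A₀ →ₗ[k] A₁) (πA : A₁ →ₗ[k] A₀)
    (iB : B₀ →ₗ[k] B₁) (πB : B₁ →ₗ[k] B₀)
    (hiA : Function.Injective iA) (hπA : Function.Surjective πA)
    (hA : LinearMap.range iA = LinearMap.ker πA)
    (hiB : Function.Injective iB) (hπB : Function.Surjective πB)
    (hB : LinearMap.range iB = LinearMap.ker πB)
    (F : Submodule k ((A₁ ⊗[k] B₀) × (A₀ ⊗[k] B₁)))
    (hF : ∀ y : (A₁ ⊗[k] B₀) × (A₀ ⊗[k] B₁), y ∈ F ↔
      TensorProduct.map πA (LinearMap.id : B₀ →ₗ[k] B₀) y.1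
        = TensorProduct.map (LinearMap.id : A₀ →ₗ[k] A₀) πB y.2)
    (Nplus : Submodule k F)
    (hNplus : ∀ y : F, y ∈ Nplus ↔ ∃ w : A₀ ⊗[k] B₀,
      (y : (A₁ ⊗[k] B₀) × (A₀ ⊗[k] B₁))
        = (TensorProduct.map iA (LinearMap.id : B₀ →ₗ[k] B₀) w,
           TensorProduct.map (LinearMap.id : A₀ →ₗ[k] A₀) iB w))
    (g : F →ₗ[k] (A₁ ⊗[k] B₁))
    (hg : ∀ y : F, g y =
      TensorProduct.map iA (LinearMap.id : B₁ →ₗ[k] B₁)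
          (y : (A₁ ⊗[k] B₀) × (A₀ ⊗[k] B₁)).2
        - TensorProduct.map (LinearMap.id : A₁ →ₗ[k] A₁) iB
          (y : (A₁ ⊗[k] B₀) × (A₀ ⊗[k] B₁)).1) :
    LinearMap.ker g = Nplus := by

  ext y
  rw [LinearMap.mem_ker, hg y, sub_eq_zero, hNplus y]
  constructor
  · intro h
    -- h : map iA id y.2 = map id iB y.1
    set u : A₁ ⊗[k] B₀ := (y : (A₁ ⊗[k] B₀) × (A₀ ⊗[k] B₁)).1 with hu
    set v : A₀ ⊗[k] B₁ := (y : (A₁ ⊗[k] B₀) × (A₀ ⊗[k] B₁)).2 with hv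
    -- rewrite maps as rTensor / lTensor
    have hExactA : Function.Exact iA πA := by
      rw [LinearMap.exact_iff, hA]
    have hExactAT : Function.Exact (iA.rTensor B₀) (πA.rTensor B₀) :=
      rTensor_exact B₀ hExactA hπA
    -- step 1 : (πA ⊗ id) u = 0
    have hinjB1 : Function.Injective (iB.lTensor A₀) :=
      Module.Flat.lTensor_preserves_injective_linearMap iB hiB
    have key : iB.lTensor A₀ (πA.rTensor B₀ u) = 0 := by
      have h1 : (iB.lTensor A₀).comp (πA.rTensor B₀) = TensorProduct.map πA iB :=
        by simp
      have h2 : (πA.rTensor B₁).comp (iB.lTensor A₁) = TensorProduct.map πA iB :=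
        by simp
      have h3 : iB.lTensor A₀ (πA.rTensor B₀ u) = πA.rTensor B₁ (iB.lTensor A₁ u) := by
        rw [← LinearMap.comp_apply, ← LinearMap.comp_apply, h1, h2]
      have h4 : (iB.lTensor A₁) u = TensorProduct.map (LinearMap.id : A₁ →ₗ[k] A₁) iB u := rfl
      rw [h3, h4, ← h]
      have h5 : πA.rTensor B₁ (TensorProduct.map iA (LinearMap.id : B₁ →ₗ[k] B₁) v)
          = TensorProduct.map (πA.comp iA) (LinearMap.id : B₁ →ₗ[k] B₁) v := by
        rw [← LinearMap.comp_apply]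
        congr 1
        rw [LinearMap.rTensor, ← TensorProduct.map_comp, LinearMap.id_comp]
      rw [h5]
      have h6 : πA.comp iA = 0 := by
        ext a
        have : iA a ∈ LinearMap.ker πA := hA ▸ LinearMap.mem_range_self iA a
        simpa using this
      rw [h6]
      rw [TensorProduct.map_zero_left]; rfl
    have h0 : πA.rTensor B₀ u = 0 := hinjB1 (by simpa using key)
    -- step 2 : u = (iA ⊗ id) w
    obtain ⟨w, hw⟩ : ∃ w : A₀ ⊗[k] B₀, iA.rTensor B₀ w = u := by
      have := (hExactAT u).mp h0
      exact this
    refine ⟨w, ?_⟩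
    have hinjA1 : Function.Injective (iA.rTensor B₁) :=
      Module.Flat.rTensor_preserves_injective_linearMap iA hiA
    have hv2 : v = iB.lTensor A₀ w := by
      apply hinjA1
      have e1 : iA.rTensor B₁ v = TensorProduct.map iA (LinearMap.id : B₁ →ₗ[k] B₁) v := rfl
      have e2 : iA.rTensor B₁ (iB.lTensor A₀ w) = TensorProduct.map iA iB w := by
        rw [← LinearMap.comp_apply]; simp
      rw [e1, e2, h]
      have e3 : TensorProduct.map (LinearMap.id : A₁ →ₗ[k] A₁) iB u
          = iB.lTensor A₁ (iA.rTensor B₀ w) := by rw [hw]; rfl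
      rw [e3, ← LinearMap.comp_apply]; simp
    refine Prod.ext ?_ ?_
    · exact hw.symm
    · exact hv2
  · rintro ⟨w, hwy⟩
    rw [hwy]
    simp only []
    rw [← LinearMap.comp_apply, ← LinearMap.comp_apply, ← TensorProduct.map_comp,
      ← TensorProduct.map_comp, LinearMap.id_comp, LinearMap.comp_id, LinearMap.id_comp,
      LinearMap.comp_id]
end

section
/- Let R be a commutative ring, let (i_A, A₁, π_A) be a self-extension of an R-module A₀ and (i_B, B₁, π_B) a self-extension of an R-module B₀. Then the image of the R-linear map A₁ ⊗ B₁ → (A₀ ⊗ B₁) × (A₁ ⊗ B₀), x ↦ ((π_A ⊗ id_{B₁}) x, (id_{A₁} ⊗ π_B) x), is exactly the fiber product U = {(y, z) ∈ (A₀ ⊗ B₁) × (A₁ ⊗ B₀) : (id_{A₀} ⊗ π_B) y = (π_A ⊗ id_{B₀}) z}; in particular, the induced map A₁ ⊗ B₁ → U is surjective. -/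
open scoped TensorProduct

/-- **Surjectivity onto the fiber product.**
For self-extensions `A = (iA, A₁, πA)` of `A₀` and `B = (iB, B₁, πB)` of `B₀`
over a commutative ring `R`, the range of
`A₁ ⊗ B₁ → (A₀ ⊗ B₁) × (A₁ ⊗ B₀)`, `x ↦ ((πA ⊗ id) x, (id ⊗ πB) x)`, is
exactly the fiber product `U = {(y,z) | (id ⊗ πB) y = (πA ⊗ id) z}`. -/
theorem range_eq_fiber_product
    {R A₀ A₁ B₀ B₁ : Type*} [CommRing R]
    [AddCommGroup A₀] [AddCommGroup A₁] [AddCommGroup B₀] [AddCommGroup B₁]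
    [Module R A₀] [Module R A₁] [Module R B₀] [Module R B₁]
    (iA : A₀ →ₗ[R] A₁) (πA : A₁ →ₗ[R] A₀)
    (iB : B₀ →ₗ[R] B₁) (πB : B₁ →ₗ[R] B₀)
    (hiA : Function.Injective iA) (hπA : Function.Surjective πA)
    (hA : LinearMap.range iA = LinearMap.ker πA)
    (hiB : Function.Injective iB) (hπB : Function.Surjective πB)
    (hB : LinearMap.range iB = LinearMap.ker πB)
    (f : (A₁ ⊗[R] B₁) →ₗ[R] (A₀ ⊗[R] B₁) × (A₁ ⊗[R] B₀))
    (hf : ∀ x : A₁ ⊗[R] B₁, f x =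
      (TensorProduct.map πA (LinearMap.id : B₁ →ₗ[R] B₁) x,
       TensorProduct.map (LinearMap.id : A₁ →ₗ[R] A₁) πB x))
    (U : Submodule R ((A₀ ⊗[R] B₁) × (A₁ ⊗[R] B₀)))
    (hU : ∀ y : (A₀ ⊗[R] B₁) × (A₁ ⊗[R] B₀), y ∈ U ↔
      TensorProduct.map (LinearMap.id : A₀ →ₗ[R] A₀) πB y.1
        = TensorProduct.map πA (LinearMap.id : B₀ →ₗ[R] B₀) y.2) :
    LinearMap.range f = U := by
  have hexA : Function.Exact iA πA := LinearMap.exact_iff.mpr hA.symm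
  ext p
  rw [hU]
  constructor
  · rintro ⟨x, rfl⟩
    rw [hf x]
    simp only
    rw [← LinearMap.comp_apply, ← LinearMap.comp_apply,
      ← TensorProduct.map_comp, ← TensorProduct.map_comp]
    simp
  · intro hp
    obtain ⟨y, z⟩ := p
    simp only at hp
    -- lift y along πA ⊗ id
    obtain ⟨x₁, hx₁⟩ : ∃ x₁ : A₁ ⊗[R] B₁,
        TensorProduct.map πA (LinearMap.id : B₁ →ₗ[R] B₁) x₁ = y := by
      obtain ⟨x₁, hx₁⟩ := LinearMap.rTensor_surjective B₁ (g := πA) hπA y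
      exact ⟨x₁, hx₁⟩
    -- the defect
    set d : A₁ ⊗[R] B₀ := z - TensorProduct.map (LinearMap.id : A₁ →ₗ[R] A₁) πB x₁
    have hd : TensorProduct.map πA (LinearMap.id : B₀ →ₗ[R] B₀) d = 0 := by
      have : TensorProduct.map πA (LinearMap.id : B₀ →ₗ[R] B₀)
          (TensorProduct.map (LinearMap.id : A₁ →ₗ[R] A₁) πB x₁)
          = TensorProduct.map (LinearMap.id : A₀ →ₗ[R] A₀) πB y := by
        rw [← hx₁, ← LinearMap.comp_apply, ← LinearMap.comp_apply,
          ← TensorProduct.map_comp, ← TensorProduct.map_comp]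
        simp
      simp [d, map_sub, this, hp]
    -- kernel of πA ⊗ id on A₁ ⊗ B₀ is range of iA ⊗ id
    have hexd : Function.Exact (LinearMap.rTensor B₀ iA) (LinearMap.rTensor B₀ πA) :=
      rTensor_exact B₀ hexA hπA
    obtain ⟨w, hw⟩ : ∃ w : A₀ ⊗[R] B₀, LinearMap.rTensor B₀ iA w = d :=
      (hexd d).1 hd
    -- lift w along id ⊗ πB
    obtain ⟨v, hv⟩ : ∃ v : A₀ ⊗[R] B₁, LinearMap.lTensor A₀ πB v = w :=
      LinearMap.lTensor_surjective A₀ (g := πB) hπB w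
    refine ⟨x₁ + LinearMap.rTensor B₁ iA v, ?_⟩
    rw [hf]
    have h1 : TensorProduct.map πA (LinearMap.id : B₁ →ₗ[R] B₁)
        (LinearMap.rTensor B₁ iA v) = 0 := by
      rw [LinearMap.rTensor, ← LinearMap.comp_apply, ← TensorProduct.map_comp]
      have : πA ∘ₗ iA = 0 := by
        ext a
        exact hexA.apply_apply_eq_zero a
      rw [this]
      simp [TensorProduct.map_zero_left]
    have h2 : TensorProduct.map (LinearMap.id : A₁ →ₗ[R] A₁) πB
        (LinearMap.rTensor B₁ iA v) = d := by
      rw [← hw, ← hv]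
      rw [LinearMap.rTensor, ← LinearMap.comp_apply, ← TensorProduct.map_comp,
        LinearMap.rTensor, LinearMap.lTensor, ← LinearMap.comp_apply,
        ← TensorProduct.map_comp]
      simp
    simp only [map_add, h1, h2, add_zero, hx₁]
    ext
    · simp
    · simp [d]
end

section
/- Let k be a field, let A = (i_A, A₁, π_A) be a self-extension of a k-vector space A₀ and B = (i_B, B₁, π_B) a self-extension of a k-vector space B₀. For the ordered pair (A, B) set F_{A,B} = {(u, v) ∈ (A₁ ⊗ B₀) × (A₀ ⊗ B₁) : (π_A ⊗ id) u = (id ⊗ π_B) v}, N_{A,B} = {((i_A ⊗ id) w, −(id ⊗ i_B) w) : w ∈ A₀ ⊗ B₀}, W_{A,B} = F_{A,B} ⧸ N_{A,B}, with structure maps Δ_{A,B}(w) = [((i_A ⊗ id) w, 0)] and p_{A,B}([(u, v)]) = (π_A ⊗ id) u, and define F_{B,A}, N_{B,A}, W_{B,A}, Δ_{B,A}, p_{B,A} analogously for the pair (B, A). Let τ denote the tensor-swap isomorphisms (e.g. A₀ ⊗ B₁ ≅ B₁ ⊗ A₀) and τ₀ : A₀ ⊗ B₀ ≅ B₀ ⊗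 A₀ the swap. Then the map (u, v) ↦ (τ v, τ u) carries F_{A,B} into F_{B,A} and N_{A,B} into N_{B,A}, and the induced k-linear map Ψ : W_{A,B} → W_{B,A} is an isomorphism satisfying Ψ ∘ Δ_{A,B} = Δ_{B,A} ∘ τ₀ and p_{B,A} ∘ Ψ = τ₀ ∘ p_{A,B}. -/
open scoped TensorProduct

private lemma comm_comm_apply {k M N : Type*} [CommRing k] [AddCommGroup M] [AddCommGroup N]
    [Module k M] [Module k N] (x : M ⊗[k] N) :
    TensorProduct.comm k N M (TensorProduct.comm k M N x) = x := by
  induction x using TensorProduct.induction_on with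
  | zero => simp
  | tmul m n => simp
  | add a b ha hb => simp [ha, hb]
/-- **Commutativity constraint on the prolongation.**
For self-extensions `A = (iA, A₁, πA)` of `A₀` and `B = (iB, B₁, πB)` of `B₀`
over a field `k`, the tensor-swap maps carry `F_{A,B}` into `F_{B,A}` and
`N_{A,B}` into `N_{B,A}`, and induce an isomorphism
`Ψ : W_{A,B} → W_{B,A}` with `Ψ ∘ Δ_{A,B} = Δ_{B,A} ∘ τ₀` and
`p_{B,A} ∘ Ψ = τ₀ ∘ p_{A,B}`. -/
theorem prolongation_commutativity
    {k A₀ A₁ B₀ B₁ : Type*} [Field k]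
    [AddCommGroup A₀] [AddCommGroup A₁] [AddCommGroup B₀] [AddCommGroup B₁]
    [Module k A₀] [Module k A₁] [Module k B₀] [Module k B₁]
    (iA : A₀ →ₗ[k] A₁) (πA : A₁ →ₗ[k] A₀)
    (iB : B₀ →ₗ[k] B₁) (πB : B₁ →ₗ[k] B₀)
    (hiA : Function.Injective iA) (hπA : Function.Surjective πA)
    (hA : LinearMap.range iA = LinearMap.ker πA)
    (hiB : Function.Injective iB) (hπB : Function.Surjective πB)
    (hB : LinearMap.range iB = LinearMap.ker πB)
    -- the data for the ordered pair (A, B)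
    (FAB : Submodule k ((A₁ ⊗[k] B₀) × (A₀ ⊗[k] B₁)))
    (hFAB : ∀ y : (A₁ ⊗[k] B₀) × (A₀ ⊗[k] B₁), y ∈ FAB ↔
      TensorProduct.map πA (LinearMap.id : B₀ →ₗ[k] B₀) y.1
        = TensorProduct.map (LinearMap.id : A₀ →ₗ[k] A₀) πB y.2)
    (NAB : Submodule k FAB)
    (hNAB : ∀ y : FAB, y ∈ NAB ↔ ∃ w : A₀ ⊗[k] B₀,
      (y : (A₁ ⊗[k] B₀) × (A₀ ⊗[k] B₁))
        = (TensorProduct.map iA (LinearMap.id : B₀ →ₗ[k] B₀) w,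
           -(TensorProduct.map (LinearMap.id : A₀ →ₗ[k] A₀) iB w)))
    (ΔAB : (A₀ ⊗[k] B₀) →ₗ[k] FAB ⧸ NAB)
    (hΔAB : ∀ (w : A₀ ⊗[k] B₀)
      (h : ((TensorProduct.map iA (LinearMap.id : B₀ →ₗ[k] B₀) w,
             (0 : A₀ ⊗[k] B₁)) : (A₁ ⊗[k] B₀) × (A₀ ⊗[k] B₁)) ∈ FAB),
      ΔAB w = NAB.mkQ ⟨(TensorProduct.map iA LinearMap.id w, 0), h⟩)
    (pAB : (FAB ⧸ NAB) →ₗ[k] (A₀ ⊗[k] B₀))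
    (hpAB : ∀ y : FAB, pAB (NAB.mkQ y) =
      TensorProduct.map πA (LinearMap.id : B₀ →ₗ[k] B₀)
        (y : (A₁ ⊗[k] B₀) × (A₀ ⊗[k] B₁)).1)
    -- the data for the ordered pair (B, A)
    (FBA : Submodule k ((B₁ ⊗[k] A₀) × (B₀ ⊗[k] A₁)))
    (hFBA : ∀ y : (B₁ ⊗[k] A₀) × (B₀ ⊗[k] A₁), y ∈ FBA ↔
      TensorProduct.map πB (LinearMap.id : A₀ →ₗ[k] A₀) y.1
        = TensorProduct.map (LinearMap.id : B₀ →ₗ[k] B₀) πA y.2)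
    (NBA : Submodule k FBA)
    (hNBA : ∀ y : FBA, y ∈ NBA ↔ ∃ w : B₀ ⊗[k] A₀,
      (y : (B₁ ⊗[k] A₀) × (B₀ ⊗[k] A₁))
        = (TensorProduct.map iB (LinearMap.id : A₀ →ₗ[k] A₀) w,
           -(TensorProduct.map (LinearMap.id : B₀ →ₗ[k] B₀) iA w)))
    (ΔBA : (B₀ ⊗[k] A₀) →ₗ[k] FBA ⧸ NBA)
    (hΔBA : ∀ (w : B₀ ⊗[k] A₀)
      (h : ((TensorProduct.map iB (LinearMap.id : A₀ →ₗ[k] A₀) w,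
             (0 : B₀ ⊗[k] A₁)) : (B₁ ⊗[k] A₀) × (B₀ ⊗[k] A₁)) ∈ FBA),
      ΔBA w = NBA.mkQ ⟨(TensorProduct.map iB LinearMap.id w, 0), h⟩)
    (pBA : (FBA ⧸ NBA) →ₗ[k] (B₀ ⊗[k] A₀))
    (hpBA : ∀ y : FBA, pBA (NBA.mkQ y) =
      TensorProduct.map πB (LinearMap.id : A₀ →ₗ[k] A₀)
        (y : (B₁ ⊗[k] A₀) × (B₀ ⊗[k] A₁)).1) :
    -- conclusion: the swap `(u, v) ↦ (τ v, τ u)` carries `F_{A,B}` to `F_{B,A}`,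
    -- `N_{A,B}` to `N_{B,A}`, and induces an isomorphism `Ψ` compatible with the
    -- structure maps via `τ₀`
    ∃ hS : ∀ y : FAB,
        ((TensorProduct.comm k A₀ B₁ (y : (A₁ ⊗[k] B₀) × (A₀ ⊗[k] B₁)).2,
          TensorProduct.comm k A₁ B₀ (y : (A₁ ⊗[k] B₀) × (A₀ ⊗[k] B₁)).1) :
          (B₁ ⊗[k] A₀) × (B₀ ⊗[k] A₁)) ∈ FBA,
      (∀ y : FAB, y ∈ NAB →
        (⟨(TensorProduct.comm k A₀ B₁ (y : (A₁ ⊗[k] B₀) × (A₀ ⊗[k] B₁)).2,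
           TensorProduct.comm k A₁ B₀ (y : (A₁ ⊗[k] B₀) × (A₀ ⊗[k] B₁)).1),
          hS y⟩ : FBA) ∈ NBA) ∧
      ∃ Ψ : (FAB ⧸ NAB) →ₗ[k] (FBA ⧸ NBA),
        (∀ y : FAB, Ψ (NAB.mkQ y) = NBA.mkQ
          ⟨(TensorProduct.comm k A₀ B₁ (y : (A₁ ⊗[k] B₀) × (A₀ ⊗[k] B₁)).2,
            TensorProduct.comm k A₁ B₀ (y : (A₁ ⊗[k] B₀) × (A₀ ⊗[k] B₁)).1),
           hS y⟩) ∧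
        Function.Bijective Ψ ∧
        (∀ w : A₀ ⊗[k] B₀, Ψ (ΔAB w) = ΔBA (TensorProduct.comm k A₀ B₀ w)) ∧
        (∀ z : FAB ⧸ NAB, pBA (Ψ z) = TensorProduct.comm k A₀ B₀ (pAB z)) := by

  classical
  -- the swap carries F_{A,B} into F_{B,A}
  have hS : ∀ y : FAB,
      ((TensorProduct.comm k A₀ B₁ (y : (A₁ ⊗[k] B₀) × (A₀ ⊗[k] B₁)).2,
        TensorProduct.comm k A₁ B₀ (y : (A₁ ⊗[k] B₀) × (A₀ ⊗[k] B₁)).1) :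
        (B₁ ⊗[k] A₀) × (B₀ ⊗[k] A₁)) ∈ FBA := by
    intro y
    rw [hFBA]
    simp only [TensorProduct.map_comm]
    exact congrArg _ ((hFAB _).mp y.2).symm
  have hT : ∀ y : FBA,
      ((TensorProduct.comm k B₀ A₁ (y : (B₁ ⊗[k] A₀) × (B₀ ⊗[k] A₁)).2,
        TensorProduct.comm k B₁ A₀ (y : (B₁ ⊗[k] A₀) × (B₀ ⊗[k] A₁)).1) :
        (A₁ ⊗[k] B₀) × (A₀ ⊗[k] B₁)) ∈ FAB := by
    intro y
    rw [hFAB]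
    simp only [TensorProduct.map_comm]
    exact congrArg _ ((hFBA _).mp y.2).symm
  set S : FAB →ₗ[k] FBA := LinearMap.codRestrict FBA
    ((LinearMap.prod
        ((TensorProduct.comm k A₀ B₁).toLinearMap ∘ₗ LinearMap.snd k (A₁ ⊗[k] B₀) (A₀ ⊗[k] B₁))
        ((TensorProduct.comm k A₁ B₀).toLinearMap ∘ₗ LinearMap.fst k (A₁ ⊗[k] B₀) (A₀ ⊗[k] B₁)))
      ∘ₗ FAB.subtype) (fun y => hS y) with hSdef
  set T : FBA →ₗ[k] FAB := LinearMap.codRestrict FAB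
    ((LinearMap.prod
        ((TensorProduct.comm k B₀ A₁).toLinearMap ∘ₗ LinearMap.snd k (B₁ ⊗[k] A₀) (B₀ ⊗[k] A₁))
        ((TensorProduct.comm k B₁ A₀).toLinearMap ∘ₗ LinearMap.fst k (B₁ ⊗[k] A₀) (B₀ ⊗[k] A₁)))
      ∘ₗ FBA.subtype) (fun y => hT y) with hTdef
  have hScoe : ∀ y : FAB, (S y : (B₁ ⊗[k] A₀) × (B₀ ⊗[k] A₁)) =
      (TensorProduct.comm k A₀ B₁ (y : (A₁ ⊗[k] B₀) × (A₀ ⊗[k] B₁)).2,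
       TensorProduct.comm k A₁ B₀ (y : (A₁ ⊗[k] B₀) × (A₀ ⊗[k] B₁)).1) := fun y => rfl
  have hTcoe : ∀ y : FBA, (T y : (A₁ ⊗[k] B₀) × (A₀ ⊗[k] B₁)) =
      (TensorProduct.comm k B₀ A₁ (y : (B₁ ⊗[k] A₀) × (B₀ ⊗[k] A₁)).2,
       TensorProduct.comm k B₁ A₀ (y : (B₁ ⊗[k] A₀) × (B₀ ⊗[k] A₁)).1) := fun y => rfl
  -- the swap carries N_{A,B} into N_{B,A}
  have hNS : ∀ y : FAB, y ∈ NAB → S y ∈ NBA := by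
    intro y hy
    obtain ⟨w, hw⟩ := (hNAB y).mp hy
    rw [hNBA]
    refine ⟨-(TensorProduct.comm k A₀ B₀ w), ?_⟩
    rw [hScoe, hw]
    simp only [map_neg, Prod.mk.injEq, neg_neg]
    constructor
    · rw [← TensorProduct.map_comm]
    · rw [← TensorProduct.map_comm]
  have hNT : ∀ y : FBA, y ∈ NBA → T y ∈ NAB := by
    intro y hy
    obtain ⟨w, hw⟩ := (hNBA y).mp hy
    rw [hNAB]
    refine ⟨-(TensorProduct.comm k B₀ A₀ w), ?_⟩
    rw [hTcoe, hw]
    simp only [map_neg, Prod.mk.injEq, neg_neg]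
    constructor
    · rw [← TensorProduct.map_comm]
    · rw [← TensorProduct.map_comm]
  refine ⟨hS, fun y hy => hNS y hy, ?_⟩
  set Ψ : (FAB ⧸ NAB) →ₗ[k] (FBA ⧸ NBA) :=
    NAB.mapQ NBA S (fun y hy => hNS y hy) with hΨdef
  set Ψ' : (FBA ⧸ NBA) →ₗ[k] (FAB ⧸ NAB) :=
    NBA.mapQ NAB T (fun y hy => hNT y hy) with hΨ'def
  have hΨapp : ∀ y : FAB, Ψ (NAB.mkQ y) = NBA.mkQ (S y) := fun y => rfl
  have hΨ'app : ∀ y : FBA, Ψ' (NBA.mkQ y) = NAB.mkQ (T y) := fun y => rfl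
  have hTS : ∀ y : FAB, T (S y) = y := by
    intro y
    apply Subtype.ext
    rw [hTcoe, hScoe]
    exact Prod.ext (comm_comm_apply _) (comm_comm_apply _)
  have hST : ∀ y : FBA, S (T y) = y := by
    intro y
    apply Subtype.ext
    rw [hScoe, hTcoe]
    exact Prod.ext (comm_comm_apply _) (comm_comm_apply _)
  have hleft : ∀ z : FAB ⧸ NAB, Ψ' (Ψ z) = z := by
    intro z
    obtain ⟨y, rfl⟩ := NAB.mkQ_surjective z
    rw [hΨapp, hΨ'app, hTS]
  have hright : ∀ z : FBA ⧸ NBA, Ψ (Ψ' z) = z := by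
    intro z
    obtain ⟨y, rfl⟩ := NBA.mkQ_surjective z
    rw [hΨ'app, hΨapp, hST]
  refine ⟨Ψ, ?_, ?_, ?_, ?_⟩
  · intro y
    exact hΨapp y
  · exact Function.bijective_iff_has_inverse.mpr ⟨Ψ', hleft, hright⟩
  · -- compatibility with Δ
    intro w
    have hπiA : πA ∘ₗ iA = 0 := by
      ext a
      have : iA a ∈ LinearMap.ker πA := hA ▸ LinearMap.mem_range_self iA a
      simpa using this
    have hπiB : πB ∘ₗ iB = 0 := by
      ext b
      have : iB b ∈ LinearMap.ker πB := hB ▸ LinearMap.mem_range_self iB b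
      simpa using this
    have hmemA : ((TensorProduct.map iA (LinearMap.id : B₀ →ₗ[k] B₀) w,
        (0 : A₀ ⊗[k] B₁)) : (A₁ ⊗[k] B₀) × (A₀ ⊗[k] B₁)) ∈ FAB := by
      rw [hFAB]
      have : TensorProduct.map πA (LinearMap.id : B₀ →ₗ[k] B₀)
          (TensorProduct.map iA (LinearMap.id : B₀ →ₗ[k] B₀) w)
          = TensorProduct.map (πA ∘ₗ iA)
              ((LinearMap.id : B₀ →ₗ[k] B₀) ∘ₗ LinearMap.id) w := by
        rw [← LinearMap.comp_apply, ← TensorProduct.map_comp]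
      simp [this, hπiA, TensorProduct.map_zero_left]
    have hmemB : ((TensorProduct.map iB (LinearMap.id : A₀ →ₗ[k] A₀)
          (TensorProduct.comm k A₀ B₀ w),
        (0 : B₀ ⊗[k] A₁)) : (B₁ ⊗[k] A₀) × (B₀ ⊗[k] A₁)) ∈ FBA := by
      rw [hFBA]
      have : TensorProduct.map πB (LinearMap.id : A₀ →ₗ[k] A₀)
          (TensorProduct.map iB (LinearMap.id : A₀ →ₗ[k] A₀)
            (TensorProduct.comm k A₀ B₀ w))
          = TensorProduct.map (πB ∘ₗ iB)
              ((LinearMap.id : A₀ →ₗ[k] A₀) ∘ₗ LinearMap.id)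
              (TensorProduct.comm k A₀ B₀ w) := by
        rw [← LinearMap.comp_apply, ← TensorProduct.map_comp]
      simp [this, hπiB, TensorProduct.map_zero_left]
    rw [hΔAB w hmemA, hΨapp, hΔBA (TensorProduct.comm k A₀ B₀ w) hmemB]
    rw [Submodule.mkQ_apply, Submodule.mkQ_apply, Submodule.Quotient.eq]
    rw [hNBA]
    refine ⟨-(TensorProduct.comm k A₀ B₀ w), ?_⟩
    have : ((S ⟨(TensorProduct.map iA LinearMap.id w, 0), hmemA⟩ -
        ⟨(TensorProduct.map iB LinearMap.id (TensorProduct.comm k A₀ B₀ w), 0), hmemB⟩ : FBA) :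
        (B₁ ⊗[k] A₀) × (B₀ ⊗[k] A₁))
        = (-(TensorProduct.map iB LinearMap.id (TensorProduct.comm k A₀ B₀ w)),
           TensorProduct.comm k A₁ B₀ (TensorProduct.map iA LinearMap.id w)) := by
      rw [Submodule.coe_sub, hScoe]
      simp [Prod.ext_iff, sub_eq_neg_add]
    rw [this]
    simp only [map_neg, Prod.mk.injEq, neg_neg]
    refine ⟨by trivial, ?_⟩
    rw [← TensorProduct.map_comm]
  · -- compatibility with p
    intro z
    obtain ⟨y, rfl⟩ := NAB.mkQ_surjective z
    rw [hΨapp, hpBA, hpAB, hScoe]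
    rw [TensorProduct.map_comm]
    exact congrArg _ ((hFAB _).mp y.2).symm
end

section
/- Let k be a field, and let A = (i_A, A₁, π_A), B = (i_B, B₁, π_B), C = (i_C, C₁, π_C) be self-extensions of k-vector spaces A₀, B₀, C₀ respectively. Set F₃ = {(u, v, w) ∈ (A₁ ⊗ B₀ ⊗ C₀) × (A₀ ⊗ B₁ ⊗ C₀) × (A₀ ⊗ B₀ ⊗ C₁) : (π_A ⊗ id ⊗ id) u = (id ⊗ π_B ⊗ id) v and (id ⊗ π_B ⊗ id) v = (id ⊗ id ⊗ π_C) w}, and let N₃ be the submodule of F₃ spanned by the elements ((i_A ⊗ id ⊗ id) s, −(id ⊗ i_B ⊗ id) s, 0) and (0, (id ⊗ i_B ⊗ id) t, −(id ⊗ id ⊗ i_C) t) for s, t ∈ A₀ ⊗ B₀ ⊗ C₀. Let W₃ = F₃ ⧸ N₃. Then the map Δ₃ : A₀ ⊗ B₀ ⊗ C₀ → W₃, s ↦ [((i_A ⊗ id ⊗ id) s, 0, 0)], is injective; there is a unique k-linear p₃ : W₃ → A₀ ⊗ B₀ ⊗ C₀ with p₃([(u, v, w)]) = (π_A ⊗ id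 ⊗ id) u; p₃ is surjective; and range Δ₃ = ker p₃. In other words, (Δ₃, W₃, p₃) is a self-extension of A₀ ⊗ B₀ ⊗ C₀. -/
open scoped TensorProduct

private lemma aux_factor {k M W P : Type*} [Field k] [AddCommGroup M]
    [Module k M] [AddCommGroup W] [Module k W] [AddCommGroup P] [Module k P]
    (q : M →ₗ[k] W) (hq : Function.Surjective q) (f : M →ₗ[k] P)
    (hker : LinearMap.ker q ≤ LinearMap.ker f) :
    ∃ g : W →ₗ[k] P, ∀ y : M, g (q y) = f y := by
  obtain ⟨e, hemk⟩ : ∃ e : (M ⧸ LinearMap.ker q) ≃ₗ[k] W,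
      ∀ y : M, e (Submodule.Quotient.mk y) = q y := by
    refine ⟨LinearMap.quotKerEquivOfSurjective q hq, fun y => ?_⟩
    simp only [LinearMap.quotKerEquivOfSurjective, LinearEquiv.trans_apply,
      LinearMap.quotKerEquivRange_apply_mk, LinearEquiv.ofTop_apply]
  refine ⟨(Submodule.liftQ (LinearMap.ker q) f hker).comp e.symm.toLinearMap,
    fun y => ?_⟩
  have h : e.symm (q y) = Submodule.Quotient.mk y := by
    apply e.injective
    rw [LinearEquiv.apply_symm_apply, hemk]
  show Submodule.liftQ (LinearMap.ker q) f hker (e.symm (q y)) = f y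
  rw [h, Submodule.liftQ_apply]

set_option maxHeartbeats 1600000 in
/-- **The triple Yoneda object is a self-extension of `A₀ ⊗ B₀ ⊗ C₀`.**
For self-extensions `A`, `B`, `C` of `A₀`, `B₀`, `C₀` over a field `k`, the
triple fiber-product quotient `W₃ = F₃ ⧸ N₃` (which realises both
`(A ⊗ B) ⊗ C` and `A ⊗ (B ⊗ C)`) is a self-extension of `A₀ ⊗ B₀ ⊗ C₀` with
the structure maps `Δ₃` and `p₃`.  (The quotient `W₃ = F₃ ⧸ N₃` is presented
by a surjective linear map `q : F₃ → W₃` with kernel `N₃`.) -/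
theorem triple_yoneda_is_self_extension
    {k A₀ A₁ B₀ B₁ C₀ C₁ : Type*} [Field k]
    [AddCommGroup A₀] [AddCommGroup A₁] [AddCommGroup B₀] [AddCommGroup B₁]
    [AddCommGroup C₀] [AddCommGroup C₁]
    [Module k A₀] [Module k A₁] [Module k B₀] [Module k B₁]
    [Module k C₀] [Module k C₁]
    (iA : A₀ →ₗ[k] A₁) (πA : A₁ →ₗ[k] A₀)
    (iB : B₀ →ₗ[k] B₁) (πB : B₁ →ₗ[k] B₀)
    (iC : C₀ →ₗ[k] C₁) (πC : C₁ →ₗ[k] C₀)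
    (hiA : Function.Injective iA) (hπA : Function.Surjective πA)
    (hA : LinearMap.range iA = LinearMap.ker πA)
    (hiB : Function.Injective iB) (hπB : Function.Surjective πB)
    (hB : LinearMap.range iB = LinearMap.ker πB)
    (hiC : Function.Injective iC) (hπC : Function.Surjective πC)
    (hC : LinearMap.range iC = LinearMap.ker πC)
    (F₃ : Submodule k (((A₁ ⊗[k] B₀) ⊗[k] C₀) × ((A₀ ⊗[k] B₁) ⊗[k] C₀) ×
      ((A₀ ⊗[k] B₀) ⊗[k] C₁)))
    (hF₃ : ∀ y : ((A₁ ⊗[k] B₀) ⊗[k] C₀) × ((A₀ ⊗[k] B₁) ⊗[k] C₀) ×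
        ((A₀ ⊗[k] B₀) ⊗[k] C₁), y ∈ F₃ ↔
      TensorProduct.map (TensorProduct.map πA (LinearMap.id : B₀ →ₗ[k] B₀))
          (LinearMap.id : C₀ →ₗ[k] C₀) y.1
        = TensorProduct.map (TensorProduct.map (LinearMap.id : A₀ →ₗ[k] A₀) πB)
          (LinearMap.id : C₀ →ₗ[k] C₀) y.2.1 ∧
      TensorProduct.map (TensorProduct.map (LinearMap.id : A₀ →ₗ[k] A₀) πB)
          (LinearMap.id : C₀ →ₗ[k] C₀) y.2.1
        = TensorProduct.map (LinearMap.id : (A₀ ⊗[k] B₀) →ₗ[k] (A₀ ⊗[k] B₀)) πC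
          y.2.2)
    -- `N₃` is the submodule of `F₃` spanned by the elements
    -- `((iA ⊗ id ⊗ id) s, -(id ⊗ iB ⊗ id) s, 0)` and
    -- `(0, (id ⊗ iB ⊗ id) t, -(id ⊗ id ⊗ iC) t)`
    (N₃ : Submodule k F₃)
    (hN₃ : N₃ = Submodule.span k
      ({y : F₃ | ∃ s : (A₀ ⊗[k] B₀) ⊗[k] C₀,
          (y : ((A₁ ⊗[k] B₀) ⊗[k] C₀) × ((A₀ ⊗[k] B₁) ⊗[k] C₀) ×
            ((A₀ ⊗[k] B₀) ⊗[k] C₁))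
          = (TensorProduct.map (TensorProduct.map iA LinearMap.id)
              (LinearMap.id : C₀ →ₗ[k] C₀) s,
             (-(TensorProduct.map (TensorProduct.map LinearMap.id iB)
              (LinearMap.id : C₀ →ₗ[k] C₀) s), 0))} ∪
       {y : F₃ | ∃ t : (A₀ ⊗[k] B₀) ⊗[k] C₀,
          (y : ((A₁ ⊗[k] B₀) ⊗[k] C₀) × ((A₀ ⊗[k] B₁) ⊗[k] C₀) ×
            ((A₀ ⊗[k] B₀) ⊗[k] C₁))
          = (0, (TensorProduct.map (TensorProduct.map LinearMap.id iB)
              (LinearMap.id : C₀ →ₗ[k] C₀) t,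
             -(TensorProduct.map
              (LinearMap.id : (A₀ ⊗[k] B₀) →ₗ[k] (A₀ ⊗[k] B₀)) iC t)))}))
    -- `W₃ = F₃ ⧸ N₃`, presented by the quotient map `q` with kernel `N₃`
    (W₃ : Type*) [AddCommGroup W₃] [Module k W₃]
    (q : F₃ →ₗ[k] W₃) (hq : Function.Surjective q)
    (hkerq : LinearMap.ker q = N₃) :
    ∃ (hmem : ∀ s : (A₀ ⊗[k] B₀) ⊗[k] C₀,
        ((TensorProduct.map (TensorProduct.map iA LinearMap.id)
            (LinearMap.id : C₀ →ₗ[k] C₀) s,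
          ((0 : (A₀ ⊗[k] B₁) ⊗[k] C₀), (0 : (A₀ ⊗[k] B₀) ⊗[k] C₁))) :
          ((A₁ ⊗[k] B₀) ⊗[k] C₀) × ((A₀ ⊗[k] B₁) ⊗[k] C₀) ×
            ((A₀ ⊗[k] B₀) ⊗[k] C₁)) ∈ F₃)
      (Δ₃ : ((A₀ ⊗[k] B₀) ⊗[k] C₀) →ₗ[k] W₃),
      -- `Δ₃ s = [((iA ⊗ id ⊗ id) s, 0, 0)]` and `Δ₃` is injective
      (∀ s : (A₀ ⊗[k] B₀) ⊗[k] C₀, Δ₃ s = q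
        ⟨(TensorProduct.map (TensorProduct.map iA LinearMap.id)
            (LinearMap.id : C₀ →ₗ[k] C₀) s, (0, 0)), hmem s⟩) ∧
      Function.Injective Δ₃ ∧
      ∃ p₃ : W₃ →ₗ[k] ((A₀ ⊗[k] B₀) ⊗[k] C₀),
        -- `p₃` is the unique linear map with `p₃ [(u,v,w)] = (πA ⊗ id ⊗ id) u`
        (∀ y : F₃, p₃ (q y) =
          TensorProduct.map (TensorProduct.map πA LinearMap.id)
            (LinearMap.id : C₀ →ₗ[k] C₀)
            (y : ((A₁ ⊗[k] B₀) ⊗[k] C₀) × ((A₀ ⊗[k] B₁) ⊗[k] C₀) ×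
              ((A₀ ⊗[k] B₀) ⊗[k] C₁)).1) ∧
        (∀ p' : W₃ →ₗ[k] ((A₀ ⊗[k] B₀) ⊗[k] C₀),
          (∀ y : F₃, p' (q y) =
            TensorProduct.map (TensorProduct.map πA LinearMap.id)
              (LinearMap.id : C₀ →ₗ[k] C₀)
              (y : ((A₁ ⊗[k] B₀) ⊗[k] C₀) × ((A₀ ⊗[k] B₁) ⊗[k] C₀) ×
                ((A₀ ⊗[k] B₀) ⊗[k] C₁)).1) → p' = p₃) ∧
        -- `p₃` is surjective and `range Δ₃ = ker p₃`
        Function.Surjective p₃ ∧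
        LinearMap.range Δ₃ = LinearMap.ker p₃ 
    := by
  classical
  -- abbreviations for the six tensored maps
  set Ia : ((A₀ ⊗[k] B₀) ⊗[k] C₀) →ₗ[k] ((A₁ ⊗[k] B₀) ⊗[k] C₀) :=
    TensorProduct.map (TensorProduct.map iA LinearMap.id) LinearMap.id with hIa
  set Pa : ((A₁ ⊗[k] B₀) ⊗[k] C₀) →ₗ[k] ((A₀ ⊗[k] B₀) ⊗[k] C₀) :=
    TensorProduct.map (TensorProduct.map πA LinearMap.id) LinearMap.id with hPa
  set Ib : ((A₀ ⊗[k] B₀) ⊗[k] C₀) →ₗ[k] ((A₀ ⊗[k] B₁) ⊗[k] C₀) :=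
    TensorProduct.map (TensorProduct.map LinearMap.id iB) LinearMap.id with hIb
  set Pb : ((A₀ ⊗[k] B₁) ⊗[k] C₀) →ₗ[k] ((A₀ ⊗[k] B₀) ⊗[k] C₀) :=
    TensorProduct.map (TensorProduct.map LinearMap.id πB) LinearMap.id with hPb
  set Ic : ((A₀ ⊗[k] B₀) ⊗[k] C₀) →ₗ[k] ((A₀ ⊗[k] B₀) ⊗[k] C₁) :=
    TensorProduct.map LinearMap.id iC with hIc
  set Pc : ((A₀ ⊗[k] B₀) ⊗[k] C₁) →ₗ[k] ((A₀ ⊗[k] B₀) ⊗[k] C₀) :=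
    TensorProduct.map LinearMap.id πC with hPc
  -- identifications with rTensor / lTensor
  have hIa' : Ia = LinearMap.rTensor C₀ (LinearMap.rTensor B₀ iA) := rfl
  have hPa' : Pa = LinearMap.rTensor C₀ (LinearMap.rTensor B₀ πA) := rfl
  have hIb' : Ib = LinearMap.rTensor C₀ (LinearMap.lTensor A₀ iB) := rfl
  have hPb' : Pb = LinearMap.rTensor C₀ (LinearMap.lTensor A₀ πB) := rfl
  have hIc' : Ic = LinearMap.lTensor (A₀ ⊗[k] B₀) iC := rfl
  have hPc' : Pc = LinearMap.lTensor (A₀ ⊗[k] B₀) πC := rfl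
  -- exactness of the three tensored sequences
  have exA : Function.Exact iA πA := LinearMap.exact_iff.mpr hA.symm
  have exB : Function.Exact iB πB := LinearMap.exact_iff.mpr hB.symm
  have exC : Function.Exact iC πC := LinearMap.exact_iff.mpr hC.symm
  have exA3 : Function.Exact Ia Pa := by
    rw [hIa', hPa']
    exact rTensor_exact C₀ (rTensor_exact B₀ exA hπA)
      (LinearMap.rTensor_surjective B₀ hπA)
  have exB3 : Function.Exact Ib Pb := by
    rw [hIb', hPb']
    exact rTensor_exact C₀ (lTensor_exact A₀ exB hπB)
      (LinearMap.lTensor_surjective A₀ hπB)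
  have exC3 : Function.Exact Ic Pc := by
    rw [hIc', hPc']
    exact lTensor_exact (A₀ ⊗[k] B₀) exC hπC
  -- injectivity of the tensored inclusions
  have injIa : Function.Injective Ia := by
    rw [hIa']
    exact Module.Flat.rTensor_preserves_injective_linearMap _
      (Module.Flat.rTensor_preserves_injective_linearMap _ hiA)
  have injIb : Function.Injective Ib := by
    rw [hIb']
    exact Module.Flat.rTensor_preserves_injective_linearMap _
      (Module.Flat.lTensor_preserves_injective_linearMap _ hiB)
  have injIc : Function.Injective Ic := by
    rw [hIc']
    exact Module.Flat.lTensor_preserves_injective_linearMap _ hiC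
  -- surjectivity of the tensored projections
  have surjPa : Function.Surjective Pa := by
    rw [hPa']
    exact LinearMap.rTensor_surjective C₀ (LinearMap.rTensor_surjective B₀ hπA)
  have surjPb : Function.Surjective Pb := by
    rw [hPb']
    exact LinearMap.rTensor_surjective C₀ (LinearMap.lTensor_surjective A₀ hπB)
  have surjPc : Function.Surjective Pc := by
    rw [hPc']
    exact LinearMap.lTensor_surjective (A₀ ⊗[k] B₀) hπC
  have hPaIa : ∀ s, Pa (Ia s) = 0 := fun s => exA3.apply_apply_eq_zero s
  have hPbIb : ∀ s, Pb (Ib s) = 0 := fun s => exB3.apply_apply_eq_zero s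
  have hPcIc : ∀ s, Pc (Ic s) = 0 := fun s => exC3.apply_apply_eq_zero s
  -- the ambient maps j0, L1, L2 and their codomain restrictions to F₃
  have hmem : ∀ s : (A₀ ⊗[k] B₀) ⊗[k] C₀,
      ((TensorProduct.map (TensorProduct.map iA LinearMap.id)
          (LinearMap.id : C₀ →ₗ[k] C₀) s,
        ((0 : (A₀ ⊗[k] B₁) ⊗[k] C₀), (0 : (A₀ ⊗[k] B₀) ⊗[k] C₁))) :
        ((A₁ ⊗[k] B₀) ⊗[k] C₀) × ((A₀ ⊗[k] B₁) ⊗[k] C₀) ×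
          ((A₀ ⊗[k] B₀) ⊗[k] C₁)) ∈ F₃ := by
    intro s
    rw [hF₃]
    refine ⟨?_, by simp⟩
    simpa using hPaIa s
  refine ⟨hmem, ?_⟩
  set j0 := Ia.prod ((0 : ((A₀ ⊗[k] B₀) ⊗[k] C₀) →ₗ[k]
      ((A₀ ⊗[k] B₁) ⊗[k] C₀)).prod
    (0 : ((A₀ ⊗[k] B₀) ⊗[k] C₀) →ₗ[k] ((A₀ ⊗[k] B₀) ⊗[k] C₁))) with hj0
  have hj0mem : ∀ s, j0 s ∈ F₃ := fun s => hmem s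
  set j : ((A₀ ⊗[k] B₀) ⊗[k] C₀) →ₗ[k] F₃ :=
    LinearMap.codRestrict F₃ j0 hj0mem with hj
  have hjval : ∀ s, (j s : ((A₁ ⊗[k] B₀) ⊗[k] C₀) × ((A₀ ⊗[k] B₁) ⊗[k] C₀) ×
      ((A₀ ⊗[k] B₀) ⊗[k] C₁)) = (Ia s, 0, 0) := fun s => rfl
  set L1a := Ia.prod ((-Ib).prod
    (0 : ((A₀ ⊗[k] B₀) ⊗[k] C₀) →ₗ[k] ((A₀ ⊗[k] B₀) ⊗[k] C₁))) with hL1a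
  have hL1mem : ∀ s, L1a s ∈ F₃ := by
    intro s
    rw [hF₃]
    constructor
    · show Pa (Ia s) = Pb (-(Ib s))
      rw [map_neg, hPaIa, hPbIb, neg_zero]
    · show Pb (-(Ib s)) = Pc 0
      rw [map_neg, hPbIb, neg_zero, map_zero]
  set L2a := (0 : ((A₀ ⊗[k] B₀) ⊗[k] C₀) →ₗ[k] ((A₁ ⊗[k] B₀) ⊗[k] C₀)).prod
    (Ib.prod (-Ic)) with hL2a
  have hL2mem : ∀ t, L2a t ∈ F₃ := by
    intro t
    rw [hF₃]
    constructor
    · show Pa 0 = Pb (Ib t)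
      rw [map_zero, hPbIb]
    · show Pb (Ib t) = Pc (-(Ic t))
      rw [map_neg, hPbIb, hPcIc, neg_zero]
  set L1 : ((A₀ ⊗[k] B₀) ⊗[k] C₀) →ₗ[k] F₃ :=
    LinearMap.codRestrict F₃ L1a hL1mem with hL1
  set L2 : ((A₀ ⊗[k] B₀) ⊗[k] C₀) →ₗ[k] F₃ :=
    LinearMap.codRestrict F₃ L2a hL2mem with hL2
  -- N₃ is the sup of the ranges of L1 and L2
  have hN₃' : N₃ = LinearMap.range L1 ⊔ LinearMap.range L2 := by
    rw [hN₃, Submodule.span_union]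
    congr 1
    · rw [← Submodule.span_eq (LinearMap.range L1)]
      congr 1
      ext y
      constructor
      · rintro ⟨s, hs⟩
        exact ⟨s, Subtype.ext hs.symm⟩
      · rintro ⟨s, rfl⟩
        exact ⟨s, rfl⟩
    · rw [← Submodule.span_eq (LinearMap.range L2)]
      congr 1
      ext y
      constructor
      · rintro ⟨t, ht⟩
        exact ⟨t, Subtype.ext ht.symm⟩
      · rintro ⟨t, rfl⟩
        exact ⟨t, rfl⟩
  refine ⟨q.comp j, fun s => rfl, ?_, ?_⟩
  · -- injectivity of Δ₃
    rw [injective_iff_map_eq_zero]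
    intro s hs
    have hmemN : j s ∈ N₃ := by
      rw [← hkerq]
      exact hs
    rw [hN₃'] at hmemN
    obtain ⟨x, ⟨a, rfl⟩, y, ⟨b, rfl⟩, hxy⟩ := Submodule.mem_sup.mp hmemN
    have hval : (Ia s, (0 : (A₀ ⊗[k] B₁) ⊗[k] C₀), (0 : (A₀ ⊗[k] B₀) ⊗[k] C₁))
        = (Ia a + 0, -(Ib a) + Ib b, 0 + -(Ic b)) := by
      have := congrArg Subtype.val hxy
      exact this.symm
    have h1 : Ia s = Ia a + 0 := congrArg Prod.fst hval
    have h2 : (0 : (A₀ ⊗[k] B₁) ⊗[k] C₀) = -(Ib a) + Ib b :=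
      congrArg (fun p => p.2.1) hval
    have h3 : (0 : (A₀ ⊗[k] B₀) ⊗[k] C₁) = 0 + -(Ic b) :=
      congrArg (fun p => p.2.2) hval
    rw [zero_add] at h3
    have hb : b = 0 := by
      apply injIc
      rw [map_zero]
      exact neg_eq_zero.mp h3.symm
    have ha : a = 0 := by
      apply injIb
      rw [map_zero]
      subst hb
      rw [map_zero, add_zero] at h2
      exact neg_eq_zero.mp h2.symm
    apply injIa
    rw [map_zero]
    subst ha hb
    rw [map_zero, add_zero] at h1
    exact h1
  · -- construction of p₃
    set πt : F₃ →ₗ[k] ((A₀ ⊗[k] B₀) ⊗[k] C₀) :=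
      Pa.comp ((LinearMap.fst k _ _).comp F₃.subtype) with hπt
    have hπtj : ∀ s, πt (j s) = 0 := fun s => hPaIa s
    have hker_le : LinearMap.ker q ≤ LinearMap.ker πt := by
      rw [hkerq, hN₃']
      apply sup_le
      · rintro x ⟨s, rfl⟩
        show Pa (Ia s) = 0
        exact hPaIa s
      · rintro x ⟨t, rfl⟩
        show Pa 0 = 0
        exact map_zero Pa
    obtain ⟨p₃, hp₃⟩ := aux_factor (M := F₃) (P := (A₀ ⊗[k] B₀) ⊗[k] C₀) q hq πt (by exact hker_le)
    refine ⟨p₃, hp₃, ?_, ?_, ?_⟩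
    · -- uniqueness
      intro p' hp'
      ext w
      obtain ⟨y, rfl⟩ := hq w
      rw [hp' y, hp₃ y]
      rfl
    · -- surjectivity
      intro x
      obtain ⟨u, hu⟩ := surjPa x
      obtain ⟨v, hv⟩ := surjPb x
      obtain ⟨w', hw'⟩ := surjPc x
      have hymem : ((u, v, w') : ((A₁ ⊗[k] B₀) ⊗[k] C₀) ×
          ((A₀ ⊗[k] B₁) ⊗[k] C₀) × ((A₀ ⊗[k] B₀) ⊗[k] C₁)) ∈ F₃ := by
        rw [hF₃]
        exact ⟨hu.trans hv.symm, hv.trans hw'.symm⟩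
      exact ⟨q ⟨(u, v, w'), hymem⟩, by rw [hp₃]; exact hu⟩
    · -- range Δ₃ = ker p₃
      ext w
      simp only [LinearMap.mem_range, LinearMap.mem_ker]
      constructor
      · rintro ⟨s, rfl⟩
        show p₃ (q (j s)) = 0
        rw [hp₃]
        exact hPaIa s
      · intro hw
        obtain ⟨y, rfl⟩ := hq w
        rw [hp₃] at hw
        set yv : (((A₁ ⊗[k] B₀) ⊗[k] C₀) × ((A₀ ⊗[k] B₁) ⊗[k] C₀) × ((A₀ ⊗[k] B₀) ⊗[k] C₁)) := (y : (((A₁ ⊗[k] B₀) ⊗[k] C₀) × ((A₀ ⊗[k] B₁) ⊗[k] C₀) × ((A₀ ⊗[k] B₀) ⊗[k] C₁))) with hyv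
        obtain ⟨hy1, hy2⟩ := (hF₃ yv).mp y.2
        have hu0 : Pa yv.1 = 0 := hw
        obtain ⟨a, ha⟩ : yv.1 ∈ Set.range Ia := exA3 _ |>.mp hu0
        have hv0 : Pb yv.2.1 = 0 := by rw [← hy1]; exact hu0
        obtain ⟨b, hb⟩ : yv.2.1 ∈ Set.range Ib := exB3 _ |>.mp hv0
        have hw0 : Pc yv.2.2 = 0 := by rw [← hy2]; exact hv0
        obtain ⟨c, hc⟩ : yv.2.2 ∈ Set.range Ic := exC3 _ |>.mp hw0
        refine ⟨a + b + c, ?_⟩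
        show q (j (a + b + c)) = q y
        have hdiff : y - j (a + b + c) ∈ LinearMap.ker q := by
          rw [hkerq, hN₃']
          apply Submodule.mem_sup.mpr
          refine ⟨L1 (-b - c), ⟨-b - c, rfl⟩, L2 (-c), ⟨-c, rfl⟩, ?_⟩
          apply Subtype.ext
          show (L1a (-b - c)) + (L2a (-c))
            = yv - (Ia (a + b + c), 0, 0)
          have h1 : (L1a (-b - c) : ((A₁ ⊗[k] B₀) ⊗[k] C₀) ×
              ((A₀ ⊗[k] B₁) ⊗[k] C₀) × ((A₀ ⊗[k] B₀) ⊗[k] C₁))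
              = (Ia (-b - c), -(Ib (-b - c)), 0) := rfl
          have h2 : (L2a (-c) : ((A₁ ⊗[k] B₀) ⊗[k] C₀) ×
              ((A₀ ⊗[k] B₁) ⊗[k] C₀) × ((A₀ ⊗[k] B₀) ⊗[k] C₁))
              = (0, Ib (-c), -(Ic (-c))) := rfl
          rw [h1, h2, Prod.mk_add_mk, Prod.mk_add_mk, Prod.mk_sub_mk,
            Prod.mk_sub_mk]
          refine Prod.ext ?_ (Prod.ext ?_ ?_)
          · show Ia (-b - c) + 0 = yv.1 - Ia (a + b + c)
            rw [← ha, add_zero, ← map_sub]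
            congr 1
            abel
          · show -(Ib (-b - c)) + Ib (-c) = yv.2.1 - 0
            rw [← hb, sub_zero, ← map_neg, ← map_add]
            congr 1
            abel
          · show 0 + -(Ic (-c)) = yv.2.2 - 0
            rw [← hc, sub_zero, zero_add, map_neg, neg_neg]
        exact ((LinearMap.sub_mem_ker_iff (M := F₃)).mp hdiff).symm
end

section
/- Let k be a commutative ring, δ : k → k a derivation, and V a k-module. On the product additive group V × V define the scalar multiplication a • (x, y) := (a·x − δ(a)·y, a·y). Then: (1) this makes V × V into a k-module, denoted DV; (2) the map ι : V → DV, v ↦ (v, 0), is k-linear, and the map d : V → DV, v ↦ (0, v), is additive and satisfies d(a·v) = δ(a) • ι(v) + a • d(v) for all a ∈ k, v ∈ V; (3) for every k-module W, every k-linear map i : V → W, and every additive map D : V → W satisfying D(a·v) = δ(a)·i(v) + a·D(v) for all a ∈ k and v ∈ V, there exists a unique k-linear map φ : DV → W such that φ ∘ ι = i and φ ∘ d = D. -/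
/-- The scalar multiplication `a • (x, y) = (a • x - δ a • y, a • y)` of the
module `DV = 𝔻 ⊗̂ V` associated with a derivation `δ` on `k`. -/
def dsmul {k V : Type*} [CommRing k] [AddCommGroup V] [Module k V]
    (δ : k → k) (a : k) (p : V × V) : V × V :=
  (a • p.1 - δ a • p.2, a • p.2)

/-- **The universal derivation `𝔻 ⊗̂ V`.**
Let `δ` be a derivation on a commutative ring `k` and `V` a `k`-module.
(1) `dsmul δ` makes the additive group `V × V` into a `k`-module `DV`;
(2) `ι v = (v, 0)` is `k`-linear and `d v = (0, v)` is additive and satisfies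
`d (a • v) = δ a • ι v + a • d v`;
(3) the pair `(ι, d)` is universal: every pair `(i, D)` with `i` linear and
`D` a derivation relative to `i` factors uniquely through a linear map `φ` on
`DV`. -/
theorem universal_derivation_module
    {k V : Type*} [CommRing k] [AddCommGroup V] [Module k V]
    (δ : k → k)
    (hδadd : ∀ a b : k, δ (a + b) = δ a + δ b)
    (hδmul : ∀ a b : k, δ (a * b) = a * δ b + b * δ a) :
    -- (1) the module axioms for `dsmul δ` on `V × V`
    (∀ p : V × V, dsmul δ 1 p = p) ∧
    (∀ (a b : k) (p : V × V), dsmul δ (a * b) p = dsmul δ a (dsmul δ b p)) ∧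
    (∀ (a : k) (p q : V × V), dsmul δ a (p + q) = dsmul δ a p + dsmul δ a q) ∧
    (∀ (a b : k) (p : V × V), dsmul δ (a + b) p = dsmul δ a p + dsmul δ b p) ∧
    (∀ p : V × V, dsmul δ 0 p = 0) ∧
    (∀ a : k, dsmul δ a (0 : V × V) = 0) ∧
    -- (2) `ι : v ↦ (v, 0)` is `k`-linear, `d : v ↦ (0, v)` is additive and is a
    --     derivation relative to `ι`
    (∀ u v : V, ((u + v, 0) : V × V) = (u, 0) + (v, 0)) ∧
    (∀ (a : k) (v : V), ((a • v, 0) : V × V) = dsmul δ a (v, 0)) ∧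
    (∀ u v : V, ((0, u + v) : V × V) = (0, u) + (0, v)) ∧
    (∀ (a : k) (v : V),
      ((0, a • v) : V × V) = dsmul δ (δ a) (v, 0) + dsmul δ a (0, v)) ∧
    -- (3) the universal property
    (∀ (W : Type*) [AddCommGroup W] [Module k W] (i : V →ₗ[k] W) (D : V → W),
      (∀ u v : V, D (u + v) = D u + D v) →
      (∀ (a : k) (v : V), D (a • v) = δ a • i v + a • D v) →
      ∃! φ : V × V → W,
        (∀ p q : V × V, φ (p + q) = φ p + φ q) ∧
        (∀ (a : k) (p : V × V), φ (dsmul δ a p) = a • φ p) ∧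
        (∀ v : V, φ (v, 0) = i v) ∧
        (∀ v : V, φ (0, v) = D v)) := by
  have hδ1 : δ 1 = 0 := by
    have := hδmul 1 1
    simpa using this
  have hδ0 : δ 0 = 0 := by
    have := hδadd 0 0
    simpa using this
  refine ⟨?_, ?_, ?_, ?_, ?_, ?_, ?_, ?_, ?_, ?_, ?_⟩
  · intro p; simp [dsmul, hδ1]
  · intro a b p; simp only [dsmul, hδmul, Prod.ext_iff]; constructor <;> module
  · intro a p q; simp [dsmul, Prod.ext_iff]; abel
  · intro a b p; simp [dsmul, hδadd, Prod.ext_iff]; constructor <;> module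
  · intro p; simp [dsmul, hδ0]
  · intro a; simp [dsmul]
  · intro u v; simp [Prod.ext_iff]
  · intro a v; simp [dsmul]
  · intro u v; simp [Prod.ext_iff]
  · intro a v; simp [dsmul, Prod.ext_iff]
  · intro W _ _ i D hDadd hDder
    refine ⟨fun p => i p.1 + D p.2, ⟨?_, ?_, ?_, ?_⟩, ?_⟩
    · intro p q; simp [map_add, hDadd]; abel
    · intro a p
      simp only [dsmul, map_sub, map_smul, hDder]
      module
    · intro v
      have : D (0 : V) = 0 := by
        have := hDadd 0 0; simpa using this.symm
      simp [this]
    · intro v; simp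
    · rintro φ ⟨hadd, hsmul, hι, hd⟩
      funext p
      have : φ p = φ (p.1, 0) + φ (0, p.2) := by
        rw [← hadd]; simp
      rw [this, hι, hd]
end

section
/- Let k be a commutative ring, δ : k → k a derivation, M a k-module, d : M → M a δ-derivation, and let D be the unique additive self-map of TensorAlgebra k M that satisfies the Leibniz rule D(x·y) = D(x)·y + x·D(y), sends algebraMap a to algebraMap (δ a), and satisfies D(ι m) = ι(d m). Let I be the two-sided ideal of TensorAlgebra k M generated by the elements ι(m)·ι(n) − ι(n)·ι(m) for m, n ∈ M. Then D(I) ⊆ I; consequently D descends to an additive map on the quotient algebra (TensorAlgebra k M) ⧸ I (the symmetric algebra of M) that satisfies the Leibniz rule, sends the image of algebraMap a to the image of algebraMap (δ a), and sends the image of ι(m) to the image of ι(d m). -/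
/-- **The derivation descends to the symmetric algebra.**
Let `δ` be a derivation on a commutative ring `k`, `M` a `k`-module,
`d : M → M` a `δ`-derivation, and `D` the induced derivation on
`TensorAlgebra k M`.  Let `I` be the two-sided ideal generated by the
commutators `ι m * ι n - ι n * ι m`.  Then `D I ⊆ I`, and `D` descends to an
additive map on the quotient algebra `(TensorAlgebra k M) ⧸ I` (the symmetric
algebra) satisfying the Leibniz rule and compatible with `algebraMap` and
`ι`. -/
theorem derivation_descends_to_symmetric_algebra
    {k M : Type*} [CommRing k] [AddCommGroup M] [Module k M]
    (δ : k → k)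
    (hδadd : ∀ a b : k, δ (a + b) = δ a + δ b)
    (hδmul : ∀ a b : k, δ (a * b) = a * δ b + b * δ a)
    (d : M → M)
    (hdadd : ∀ x y : M, d (x + y) = d x + d y)
    (hd : ∀ (a : k) (m : M), d (a • m) = δ a • m + a • d m)
    (D : TensorAlgebra k M → TensorAlgebra k M)
    (hDadd : ∀ x y : TensorAlgebra k M, D (x + y) = D x + D y)
    (hDmul : ∀ x y : TensorAlgebra k M, D (x * y) = D x * y + x * D y)
    (hDalg : ∀ a : k, D (algebraMap k (TensorAlgebra k M) a)
      = algebraMap k (TensorAlgebra k M) (δ a))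
    (hDι : ∀ m : M, D (TensorAlgebra.ι k m) = TensorAlgebra.ι k (d m))
    -- `I` is the two-sided ideal generated by the commutators
    (I : TwoSidedIdeal (TensorAlgebra k M))
    (hI : I = TwoSidedIdeal.span
      {x : TensorAlgebra k M | ∃ m n : M,
        x = TensorAlgebra.ι k m * TensorAlgebra.ι k n
          - TensorAlgebra.ι k n * TensorAlgebra.ι k m}) :
    -- `D` maps `I` into `I` ...
    (∀ x : TensorAlgebra k M, x ∈ I → D x ∈ I) ∧
    -- ... hence descends to the quotient algebra `(TensorAlgebra k M) ⧸ I`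
    ∃ Dbar : I.ringCon.Quotient → I.ringCon.Quotient,
      (∀ x : TensorAlgebra k M,
        Dbar (RingCon.mk' I.ringCon x) = RingCon.mk' I.ringCon (D x)) ∧
      (∀ u v : I.ringCon.Quotient, Dbar (u + v) = Dbar u + Dbar v) ∧
      (∀ u v : I.ringCon.Quotient, Dbar (u * v) = Dbar u * v + u * Dbar v) ∧
      (∀ a : k, Dbar (RingCon.mk' I.ringCon (algebraMap k (TensorAlgebra k M) a))
        = RingCon.mk' I.ringCon (algebraMap k (TensorAlgebra k M) (δ a))) ∧
      (∀ m : M, Dbar (RingCon.mk' I.ringCon (TensorAlgebra.ι k m))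
        = RingCon.mk' I.ringCon (TensorAlgebra.ι k (d m))) := by
  -- basic consequences of additivity of `D`
  have hD0 : D 0 = 0 := by
    have h := hDadd 0 0
    rw [add_zero] at h
    exact add_eq_right.mp h.symm
  have hDneg : ∀ x, D (-x) = -D x := by
    intro x
    have h := hDadd x (-x)
    rw [add_neg_cancel, hD0] at h
    exact (neg_eq_of_add_eq_zero_right h.symm).symm
  have hDsub : ∀ x y, D (x - y) = D x - D y := by
    intro x y
    rw [sub_eq_add_neg, hDadd, hDneg, sub_eq_add_neg]
  -- the set of elements of `I` whose image under `D` is in `I` is a two-sided ideal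
  set S : Set (TensorAlgebra k M) :=
    {x : TensorAlgebra k M | ∃ m n : M,
      x = TensorAlgebra.ι k m * TensorAlgebra.ι k n
        - TensorAlgebra.ι k n * TensorAlgebra.ι k m} with hS
  let J : TwoSidedIdeal (TensorAlgebra k M) :=
    TwoSidedIdeal.mk' {x | x ∈ I ∧ D x ∈ I}
      (⟨I.zero_mem, by rw [hD0]; exact I.zero_mem⟩)
      (fun {x y} hx hy => ⟨I.add_mem hx.1 hy.1, by
        rw [hDadd]; exact I.add_mem hx.2 hy.2⟩)
      (fun {x} hx => ⟨I.neg_mem hx.1, by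
        rw [hDneg]; exact I.neg_mem hx.2⟩)
      (fun {x y} hy => ⟨I.mul_mem_left _ _ hy.1, by
        rw [hDmul]
        exact I.add_mem (I.mul_mem_left _ _ hy.1) (I.mul_mem_left _ _ hy.2)⟩)
      (fun {x y} hx => ⟨I.mul_mem_right _ _ hx.1, by
        rw [hDmul]
        exact I.add_mem (I.mul_mem_right _ _ hx.2) (I.mul_mem_right _ _ hx.1)⟩)
  have hSJ : S ⊆ (J : Set (TensorAlgebra k M)) := by
    rintro x ⟨m, n, rfl⟩
    rw [TwoSidedIdeal.coe_mk']
    constructor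
    · rw [hI]
      exact TwoSidedIdeal.subset_span ⟨m, n, rfl⟩
    · rw [hDsub, hDmul, hDmul, hDι, hDι]
      have h1 : TensorAlgebra.ι k (d m) * TensorAlgebra.ι k n
          - TensorAlgebra.ι k n * TensorAlgebra.ι k (d m) ∈ I := by
        rw [hI]; exact TwoSidedIdeal.subset_span ⟨d m, n, rfl⟩
      have h2 : TensorAlgebra.ι k m * TensorAlgebra.ι k (d n)
          - TensorAlgebra.ι k (d n) * TensorAlgebra.ι k m ∈ I := by
        rw [hI]; exact TwoSidedIdeal.subset_span ⟨m, d n, rfl⟩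
      have := I.add_mem h1 h2
      convert this using 1
      abel
  have hmain : ∀ x : TensorAlgebra k M, x ∈ I → D x ∈ I := by
    intro x hx
    rw [hI] at hx
    have hxJ : x ∈ J := TwoSidedIdeal.mem_span_iff.mp hx J hSJ
    rw [TwoSidedIdeal.mem_mk'] at hxJ
    exact hxJ.2
  refine ⟨hmain, ?_⟩
  -- the descended map
  have hwd : ∀ a b : TensorAlgebra k M, I.ringCon a b →
      RingCon.mk' I.ringCon (D a) = RingCon.mk' I.ringCon (D b) := by
    intro a b hab
    have : a - b ∈ I := (TwoSidedIdeal.rel_iff I a b).mp hab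
    have hD : D a - D b ∈ I := by
      rw [← hDsub]; exact hmain _ this
    exact (RingCon.eq I.ringCon).mpr ((TwoSidedIdeal.rel_iff I _ _).mpr hD)
  refine ⟨fun q => Quotient.liftOn q (fun x => RingCon.mk' I.ringCon (D x)) hwd,
    fun x => rfl, ?_, ?_,
    fun a => by
      show RingCon.mk' I.ringCon (D (algebraMap k (TensorAlgebra k M) a)) = _
      rw [hDalg],
    fun m => by
      show RingCon.mk' I.ringCon (D (TensorAlgebra.ι k m)) = _
      rw [hDι]⟩
  · intro u v
    obtain ⟨x, rfl⟩ := Quotient.exists_rep u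
    obtain ⟨y, rfl⟩ := Quotient.exists_rep v
    show RingCon.mk' I.ringCon (D (x + y))
      = RingCon.mk' I.ringCon (D x) + RingCon.mk' I.ringCon (D y)
    rw [hDadd, map_add]
  · intro u v
    obtain ⟨x, rfl⟩ := Quotient.exists_rep u
    obtain ⟨y, rfl⟩ := Quotient.exists_rep v
    show RingCon.mk' I.ringCon (D (x * y))
      = RingCon.mk' I.ringCon (D x) * RingCon.mk' I.ringCon y
        + RingCon.mk' I.ringCon x * RingCon.mk' I.ringCon (D y)
    rw [hDmul, map_add, map_mul, map_mul]
end

section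
/- Let k be a commutative ring, E a k-module, i : k → E an injective k-linear map, and p : E → k a surjective k-linear map with range i = ker p. Let D : k → End_k(E) be a ring homomorphism into the ring of k-linear endomorphisms of E (under composition), such that for all a, b ∈ k and all x ∈ E: D(a)(i b) = i(a·b) and p(D(a)(x)) = a·p(x). Then there exists a unique function δ : k → k such that D(a)(x) = a·x + δ(a)·i(p x) for all a ∈ k and x ∈ E; moreover, δ is a derivation on k: it is additive and satisfies δ(a·b) = a·δ(b) + b·δ(a) for all a, b ∈ k. -/
/-- **A differential structure on the unit induces a derivation on
`k = End(𝟙)`.**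
Let `k` be a commutative ring, `E` a `k`-module fitting in an exact sequence
`0 → k → E → k → 0` (via `i` and `p`), and `D : k →+* End_k E` a ring
homomorphism with `D a (i b) = i (a * b)` and `p (D a x) = a * p x`.  Then
there is a unique function `δ : k → k` with
`D a x = a • x + δ a • i (p x)`, and `δ` is a derivation on `k`. -/
theorem differential_structure_gives_derivation
    {k E : Type*} [CommRing k] [AddCommGroup E] [Module k E]
    (i : k →ₗ[k] E) (p : E →ₗ[k] k)
    (hi : Function.Injective i) (hp : Function.Surjective p)
    (hip : LinearMap.range i = LinearMap.ker p)
    (D : k →+* Module.End k E)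
    (hDi : ∀ a b : k, D a (i b) = i (a * b))
    (hDp : ∀ (a : k) (x : E), p (D a x) = a * p x) :
    ∃ δ : k → k,
      -- the defining property of `δ`
      (∀ (a : k) (x : E), D a x = a • x + δ a • i (p x)) ∧
      -- uniqueness
      (∀ δ' : k → k, (∀ (a : k) (x : E), D a x = a • x + δ' a • i (p x)) →
        δ' = δ) ∧
      -- `δ` is a derivation on `k`
      (∀ a b : k, δ (a + b) = δ a + δ b) ∧
      (∀ a b : k, δ (a * b) = a * δ b + b * δ a) := by
  obtain ⟨e, he⟩ := hp 1
  -- choose δ a with i (δ a) = D a e - a • e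
  have hmem : ∀ a : k, D a e - a • e ∈ LinearMap.range i := by
    intro a
    rw [hip, LinearMap.mem_ker, map_sub, hDp, map_smul, he, smul_eq_mul,
      mul_one]
    exact sub_self a
  choose δ hδ using fun a => hmem a
  have hδe : ∀ a : k, D a e = a • e + i (δ a) := by
    intro a; rw [hδ a]; abel
  have key : ∀ (a : k) (x : E), D a x = a • x + δ a • i (p x) := by
    intro a x
    have hy : x - p x • e ∈ LinearMap.range i := by
      rw [hip, LinearMap.mem_ker, map_sub, map_smul, he, smul_eq_mul, mul_one,
        sub_self]
    obtain ⟨b, hb⟩ := hy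
    have hx : x = i b + p x • e := by rw [hb]; abel
    have h1 : D a (i b) = a • i b := by rw [hDi, ← map_smul, smul_eq_mul]
    have h2 : δ a • i (p x) = p x • i (δ a) := by
      rw [← i.map_smul, ← i.map_smul, smul_eq_mul, smul_eq_mul, mul_comm]
    have h3 : D a x = D a (i b) + p x • D a e := by
      conv_lhs => rw [hx]
      rw [map_add, map_smul]
    have hax : a • x = a • i b + p x • (a • e) := by
      conv_lhs => rw [hx]
      rw [smul_add, smul_comm]
    rw [h3, h1, hδe, h2, smul_add, hax]
    abel
  refine ⟨δ, key, ?_, ?_, ?_⟩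
  · intro δ' h
    funext a
    apply hi
    have h1 := (h a e).symm.trans (key a e)
    have h2 : δ' a • i (p e) = δ a • i (p e) := add_left_cancel h1
    rw [he, ← map_smul, ← map_smul, smul_eq_mul, smul_eq_mul, mul_one,
      mul_one] at h2
    exact h2
  · intro a b
    apply hi
    have h1 : (a + b) • e + i (δ (a + b)) = (a • e + i (δ a)) + (b • e + i (δ b)) := by
      rw [← hδe, ← hδe, ← hδe, map_add, LinearMap.add_apply]
    have h2 : i (δ (a + b)) - (i (δ a) + i (δ b)) = 0 := by
      calc i (δ (a + b)) - (i (δ a) + i (δ b))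
          = ((a + b) • e + i (δ (a + b)))
            - ((a • e + i (δ a)) + (b • e + i (δ b))) := by
            rw [add_smul]; abel
        _ = 0 := by rw [h1, sub_self]
    rw [map_add]
    exact sub_eq_zero.mp h2
  · intro a b
    apply hi
    have h1 : D (a * b) e = (a * b) • e + i (δ (a * b)) := hδe _
    have h2 : D (a * b) e = (a * b) • e + (a • i (δ b) + b • i (δ a)) := by
      have hm : D (a * b) e = D a (D b e) := by rw [map_mul]; rfl
      rw [hm, hδe b, map_add, map_smul, hδe a, hDi, smul_add, smul_smul,
        mul_comm b a]
      have : i (a * δ b) = a • i (δ b) := by rw [← map_smul, smul_eq_mul]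
      rw [this]
      abel
    have h3 : i (δ (a * b)) = a • i (δ b) + b • i (δ a) :=
      add_left_cancel (h1.symm.trans h2)
    rw [h3, map_add]
    simp only [← map_smul, smul_eq_mul]
end
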